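/- arXiv:1509.06255 — 5 statements merged into one kernel-verified Lean document; each statement's English description precedes it below -/
import Mathlib

section
/- Let u₀, 𝒜 ∈ ℝ, ε ∈ (0, 1) and r₀ > 0. Suppose u, f : [r₀, ∞) → ℝ satisfy u(r) = 1 + u₀/r + O(r^{−2+ε}) and f′(r) = r/√(1 + r²) + 𝒜/r + O(r^{−2+ε}) as r → ∞, and suppose V : [r₀, ∞) → ℝ satisfies V(r) = O(r^{ε}) as r → ∞. Then [1 + u(r)²((1 + r²) f′(r)² + V(r))]^{−1/2} = 1/r − (u₀ + 𝒜)/r² + O(r^{−3+ε}) as r → ∞. -/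
open Filter Asymptotics

private lemma toO {F : ℝ → ℝ} {p : ℝ}
    (h : ∃ C R, ∀ r ≥ R, |F r| ≤ C * r ^ p) :
    F =O[atTop] fun r : ℝ => r ^ p := by
  obtain ⟨C, R, h⟩ := h
  rw [isBigO_iff]
  refine ⟨C, ?_⟩
  filter_upwards [eventually_ge_atTop R, eventually_ge_atTop (1:ℝ)] with r hr hr1
  have hr0 : (0:ℝ) < r := by linarith
  rw [Real.norm_eq_abs, Real.norm_eq_abs, abs_of_pos (Real.rpow_pos_of_pos hr0 p)]
  exact h r hr

private lemma rpow_O_rpow {p q : ℝ} (h : p ≤ q) :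
    (fun r : ℝ => r ^ p) =O[atTop] fun r : ℝ => r ^ q := by
  rw [isBigO_iff]
  refine ⟨1, ?_⟩
  filter_upwards [eventually_ge_atTop (1:ℝ)] with r hr1
  have hr0 : (0:ℝ) < r := by linarith
  rw [Real.norm_eq_abs, Real.norm_eq_abs, abs_of_pos (Real.rpow_pos_of_pos hr0 p),
    abs_of_pos (Real.rpow_pos_of_pos hr0 q), one_mul]
  exact Real.rpow_le_rpow_of_exponent_le hr1 h

private lemma mulO {f₁ f₂ : ℝ → ℝ} {p q : ℝ}
    (h₁ : f₁ =O[atTop] fun r : ℝ => r ^ p) (h₂ : f₂ =O[atTop] fun r : ℝ => r ^ q) :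
    (fun r => f₁ r * f₂ r) =O[atTop] fun r : ℝ => r ^ (p + q) := by
  refine (h₁.mul h₂).trans (Filter.EventuallyEq.isBigO ?_)
  filter_upwards [eventually_gt_atTop (0:ℝ)] with r hr0
  exact (Real.rpow_add hr0 p q).symm

private lemma boundO {F : ℝ → ℝ} {c : ℝ}
    (h : ∀ᶠ r in atTop, |F r| ≤ c) : F =O[atTop] fun r : ℝ => r ^ (0:ℝ) := by
  rw [isBigO_iff]
  refine ⟨c, ?_⟩
  filter_upwards [h, eventually_gt_atTop (0:ℝ)] with r hr hr0
  rw [Real.norm_eq_abs, Real.norm_eq_abs, Real.rpow_zero, abs_one, mul_one]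
  exact hr

private lemma rpow_two' {r : ℝ} (hr : 0 < r) : r ^ (2:ℝ) = r ^ 2 := by
  rw [show (2:ℝ) = ((2:ℕ):ℝ) by norm_num, Real.rpow_natCast]

set_option maxHeartbeats 1000000 in
/-- Expansion of (1 + u²|∇f|²_g)^{−1/2} = 1/r − (u₀ + 𝒜)/r² + O(r^{−3+ε}),
where |∇f|²_g = (1 + r²) f′² + V with V = O(r^ε). -/
theorem stmt_6 (u₀ 𝒜 ε r₀ : ℝ) (hε : ε ∈ Set.Ioo (0 : ℝ) 1) (hr₀ : 0 < r₀)
    (u f f' V : ℝ → ℝ)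
    (hfd : ∀ r ≥ r₀, HasDerivAt f (f' r) r)
    (hu : ∃ C R, ∀ r ≥ R, |u r - (1 + u₀ / r)| ≤ C * r ^ (-2 + ε))
    (hf' : ∃ C R, ∀ r ≥ R,
      |f' r - (r / Real.sqrt (1 + r ^ 2) + 𝒜 / r)| ≤ C * r ^ (-2 + ε))
    (hV : ∃ C R, ∀ r ≥ R, |V r| ≤ C * r ^ ε) :
    ∃ C R, ∀ r ≥ R,
      |(Real.sqrt (1 + u r ^ 2 * ((1 + r ^ 2) * f' r ^ 2 + V r)))⁻¹ -
        (1 / r - (u₀ + 𝒜) / r ^ 2)| ≤ C * r ^ (-3 + ε) := by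
  obtain ⟨hε0, hε1⟩ := hε
  set a : ℝ := u₀ + 𝒜 with ha
  set s : ℝ → ℝ := fun r => r / Real.sqrt (1 + r ^ 2) + 𝒜 / r with hs_def
  -- basic big-O facts
  have hδu : (fun r => u r - (1 + u₀ / r)) =O[atTop] fun r : ℝ => r ^ (-2 + ε) := toO hu
  have hδf : (fun r => f' r - s r) =O[atTop] fun r : ℝ => r ^ (-2 + ε) := toO hf'
  have hVO : V =O[atTop] fun r : ℝ => r ^ ε := toO hV
  have hneg : (-2 + ε : ℝ) ≤ 0 := by linarith
  have hpO : (fun r : ℝ => 1 + u₀ / r) =O[atTop] fun r : ℝ => r ^ (0:ℝ) := by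
    apply boundO (c := 1 + |u₀|)
    filter_upwards [eventually_ge_atTop (1:ℝ)] with r hr1
    have hr0 : (0:ℝ) < r := by linarith
    have : |u₀ / r| ≤ |u₀| := by
      rw [abs_div, abs_of_pos hr0, div_le_iff₀ hr0]
      nlinarith [abs_nonneg u₀]
    calc |1 + u₀ / r| ≤ |(1:ℝ)| + |u₀ / r| := abs_add_le _ _
      _ ≤ 1 + |u₀| := by rw [abs_one]; linarith
  have hqO : (fun r : ℝ => 1 + 2 * u₀ / r) =O[atTop] fun r : ℝ => r ^ (0:ℝ) := by
    apply boundO (c := 1 + |2 * u₀|)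
    filter_upwards [eventually_ge_atTop (1:ℝ)] with r hr1
    have hr0 : (0:ℝ) < r := by linarith
    have : |2 * u₀ / r| ≤ |2 * u₀| := by
      rw [abs_div, abs_of_pos hr0, div_le_iff₀ hr0]
      nlinarith [abs_nonneg (2 * u₀)]
    calc |1 + 2 * u₀ / r| ≤ |(1:ℝ)| + |2 * u₀ / r| := abs_add_le _ _
      _ ≤ 1 + |2 * u₀| := by rw [abs_one]; linarith
  have huO : u =O[atTop] fun r : ℝ => r ^ (0:ℝ) := by
    have := ((hδu.trans (rpow_O_rpow hneg)).add hpO)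
    exact this.congr_left (fun r => by ring)
  have hsO : s =O[atTop] fun r : ℝ => r ^ (0:ℝ) := by
    apply boundO (c := 1 + |𝒜|)
    filter_upwards [eventually_ge_atTop (1:ℝ)] with r hr1
    have hr0 : (0:ℝ) < r := by linarith
    have h2 : (0:ℝ) ≤ 1 + r ^ 2 := by positivity
    have ht0 : 0 < Real.sqrt (1 + r ^ 2) := Real.sqrt_pos.mpr (by nlinarith)
    have ht2 : Real.sqrt (1 + r ^ 2) ^ 2 = 1 + r ^ 2 := Real.sq_sqrt h2
    have htr : r ≤ Real.sqrt (1 + r ^ 2) := by nlinarith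
    have h1 : |r / Real.sqrt (1 + r ^ 2)| ≤ 1 := by
      rw [abs_div, abs_of_pos hr0, abs_of_pos ht0, div_le_one ht0]; exact htr
    have h2' : |𝒜 / r| ≤ |𝒜| := by
      rw [abs_div, abs_of_pos hr0, div_le_iff₀ hr0]
      nlinarith [abs_nonneg 𝒜]
    calc |s r| ≤ |r / Real.sqrt (1 + r ^ 2)| + |𝒜 / r| := abs_add_le _ _
      _ ≤ 1 + |𝒜| := by linarith
  have hf'O : f' =O[atTop] fun r : ℝ => r ^ (0:ℝ) := by
    have := ((hδf.trans (rpow_O_rpow hneg)).add hsO)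
    exact this.congr_left (fun r => by ring)
  have h1r2 : (fun r : ℝ => 1 + r ^ 2) =O[atTop] fun r : ℝ => r ^ (2:ℝ) := by
    rw [isBigO_iff]
    refine ⟨2, ?_⟩
    filter_upwards [eventually_ge_atTop (1:ℝ)] with r hr1
    have hr0 : (0:ℝ) < r := by linarith
    rw [Real.norm_eq_abs, Real.norm_eq_abs, rpow_two' hr0,
      abs_of_pos (by positivity : (0:ℝ) < 1 + r ^ 2), abs_of_pos (by positivity : (0:ℝ) < r ^ 2)]
    nlinarith
  -- step A : (1+r²) f'² = r² + 2𝒜 r + O(r^ε)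
  have hpart1 : (fun r : ℝ => (1 + r ^ 2) * s r ^ 2 - (r ^ 2 + 2 * 𝒜 * r))
      =O[atTop] fun r : ℝ => r ^ (0:ℝ) := by
    apply boundO (c := 2 * |𝒜| + 2 * 𝒜 ^ 2)
    filter_upwards [eventually_ge_atTop (1:ℝ)] with r hr1
    have hr0 : (0:ℝ) < r := by linarith
    set t := Real.sqrt (1 + r ^ 2) with htdef
    have h2 : (0:ℝ) ≤ 1 + r ^ 2 := by positivity
    have ht0 : 0 < t := Real.sqrt_pos.mpr (by nlinarith)
    have ht2 : t ^ 2 = 1 + r ^ 2 := Real.sq_sqrt h2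
    have htr : r ≤ t := by nlinarith
    have htr' : t ≤ r + 1 := by nlinarith
    have hid : (1 + r ^ 2) * s r ^ 2 - (r ^ 2 + 2 * 𝒜 * r)
        = 2 * 𝒜 * (t - r) + 𝒜 ^ 2 * (1 + 1 / r ^ 2) := by
      have hsr : s r = r / t + 𝒜 / r := rfl
      rw [hsr, ← ht2]
      field_simp
      linear_combination 𝒜 ^ 2 * ht2
    rw [hid]
    have h1r2' : 1 / r ^ 2 ≤ 1 := by
      rw [div_le_one (by positivity)]; nlinarith
    have habs : |2 * 𝒜 * (t - r)| ≤ 2 * |𝒜| := by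
      rw [abs_mul, abs_of_nonneg (by linarith : (0:ℝ) ≤ t - r)]
      have : |2 * 𝒜| = 2 * |𝒜| := by rw [abs_mul]; norm_num
      rw [this]
      nlinarith [abs_nonneg 𝒜]
    have habs2 : |𝒜 ^ 2 * (1 + 1 / r ^ 2)| ≤ 2 * 𝒜 ^ 2 := by
      rw [abs_mul, abs_of_nonneg (by positivity : (0:ℝ) ≤ 𝒜 ^ 2),
        abs_of_nonneg (by positivity : (0:ℝ) ≤ 1 + 1 / r ^ 2)]
      nlinarith
    calc |2 * 𝒜 * (t - r) + 𝒜 ^ 2 * (1 + 1 / r ^ 2)|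
        ≤ |2 * 𝒜 * (t - r)| + |𝒜 ^ 2 * (1 + 1 / r ^ 2)| := abs_add_le _ _
      _ ≤ 2 * |𝒜| + 2 * 𝒜 ^ 2 := by linarith
  have hpart2 : (fun r : ℝ => (1 + r ^ 2) * ((f' r + s r) * (f' r - s r)))
      =O[atTop] fun r : ℝ => r ^ ε := by
    have h0 : (fun r => f' r + s r) =O[atTop] fun r : ℝ => r ^ (0:ℝ) := hf'O.add hsO
    have := mulO h1r2 (mulO h0 hδf)
    have he : (2 : ℝ) + (0 + (-2 + ε)) = ε := by ring
    rwa [he] at this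
  have hW : (fun r : ℝ => (1 + r ^ 2) * f' r ^ 2 - (r ^ 2 + 2 * 𝒜 * r))
      =O[atTop] fun r : ℝ => r ^ ε := by
    have := (hpart1.trans (rpow_O_rpow hε0.le)).add hpart2
    exact this.congr_left (fun r => by ring)
  -- step B : u² = 1 + 2u₀/r + O(r^{-2+ε})
  have hu2 : (fun r : ℝ => u r ^ 2 - (1 + 2 * u₀ / r)) =O[atTop] fun r : ℝ => r ^ (-2 + ε) := by
    have tA : (fun r : ℝ => (u r - (1 + u₀ / r)) * (u r + (1 + u₀ / r)))
        =O[atTop] fun r : ℝ => r ^ (-2 + ε) := by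
      have := mulO hδu (huO.add hpO)
      have he : (-2 + ε : ℝ) + 0 = -2 + ε := by ring
      rwa [he] at this
    have tB : (fun r : ℝ => u₀ ^ 2 / r ^ 2) =O[atTop] fun r : ℝ => r ^ (-2 + ε) := by
      refine IsBigO.trans ?_ (rpow_O_rpow (by linarith : (-2:ℝ) ≤ -2 + ε))
      rw [isBigO_iff]
      refine ⟨u₀ ^ 2, ?_⟩
      filter_upwards [eventually_ge_atTop (1:ℝ)] with r hr1
      have hr0 : (0:ℝ) < r := by linarith
      have hrp : r ^ (-2:ℝ) = (r ^ 2)⁻¹ := by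
        rw [show (-2:ℝ) = -(2:ℝ) by norm_num, Real.rpow_neg hr0.le, rpow_two' hr0]
      rw [Real.norm_eq_abs, Real.norm_eq_abs, hrp,
        abs_of_nonneg (by positivity : (0:ℝ) ≤ u₀ ^ 2 / r ^ 2),
        abs_of_pos (by positivity : (0:ℝ) < (r ^ 2)⁻¹)]
      rw [div_eq_mul_inv]
    have := tA.add tB
    exact this.congr_left (fun r => by ring)
  -- W + V = O(r²)
  have hpoly : (fun r : ℝ => r ^ 2 + 2 * 𝒜 * r) =O[atTop] fun r : ℝ => r ^ (2:ℝ) := by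
    rw [isBigO_iff]
    refine ⟨1 + 2 * |𝒜|, ?_⟩
    filter_upwards [eventually_ge_atTop (1:ℝ)] with r hr1
    have hr0 : (0:ℝ) < r := by linarith
    rw [Real.norm_eq_abs, Real.norm_eq_abs, rpow_two' hr0,
      abs_of_pos (by positivity : (0:ℝ) < r ^ 2)]
    rw [abs_le]
    constructor <;>
      nlinarith [le_abs_self 𝒜, neg_abs_le 𝒜, abs_nonneg 𝒜,
        mul_le_mul_of_nonneg_left (show r ≤ r ^ 2 by nlinarith) (abs_nonneg 𝒜),
        mul_le_mul_of_nonneg_right (neg_abs_le 𝒜) hr0.le,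
        mul_le_mul_of_nonneg_right (le_abs_self 𝒜) hr0.le]
  have hWV : (fun r : ℝ => (1 + r ^ 2) * f' r ^ 2 + V r) =O[atTop] fun r : ℝ => r ^ (2:ℝ) := by
    have := ((hW.trans (rpow_O_rpow (by linarith : ε ≤ 2))).add
      (hVO.trans (rpow_O_rpow (by linarith : ε ≤ 2)))).add hpoly
    exact this.congr_left (fun r => by ring)
  -- the master expansion: g - (r² + 2ar) = O(r^ε)
  have hg : (fun r : ℝ => (1 + u r ^ 2 * ((1 + r ^ 2) * f' r ^ 2 + V r)) - (r ^ 2 + 2 * a * r))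
      =O[atTop] fun r : ℝ => r ^ ε := by
    have t1 : (fun _ : ℝ => (1 : ℝ) + 4 * u₀ * 𝒜) =O[atTop] fun r : ℝ => r ^ ε := by
      refine IsBigO.trans ?_ (rpow_O_rpow hε0.le)
      exact boundO (c := |1 + 4 * u₀ * 𝒜|) (Eventually.of_forall fun r => le_refl _)
    have t2 : (fun r : ℝ => (u r ^ 2 - (1 + 2 * u₀ / r)) * ((1 + r ^ 2) * f' r ^ 2 + V r))
        =O[atTop] fun r : ℝ => r ^ ε := by
      have := mulO hu2 hWV
      have he : (-2 + ε : ℝ) + 2 = ε := by ring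
      rwa [he] at this
    have t3 : (fun r : ℝ => (1 + 2 * u₀ / r) *
        ((1 + r ^ 2) * f' r ^ 2 - (r ^ 2 + 2 * 𝒜 * r) + V r))
        =O[atTop] fun r : ℝ => r ^ ε := by
      have := mulO hqO (hW.add hVO)
      have he : (0:ℝ) + ε = ε := by ring
      rwa [he] at this
    have hsum := (t1.add t2).add t3
    refine hsum.congr' ?_ Filter.EventuallyEq.rfl
    filter_upwards [eventually_gt_atTop (0:ℝ)] with r hr0
    have hrne : r ≠ 0 := ne_of_gt hr0
    field_simp
    ring
  -- extract a concrete bound for E := g - (r² + 2ar)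
  rw [isBigO_iff] at hg
  obtain ⟨c, hc⟩ := hg
  set c' : ℝ := |c| with hc'
  -- final estimate
  have hfin : ∀ᶠ r in atTop,
      |(Real.sqrt (1 + u r ^ 2 * ((1 + r ^ 2) * f' r ^ 2 + V r)))⁻¹ -
        (1 / r - a / r ^ 2)| ≤
      (8 * (3 * a ^ 2 + 2 * |a| ^ 3 + 4 * c')) * r ^ (-3 + ε) := by
    filter_upwards [hc, eventually_ge_atTop (1:ℝ),
      eventually_ge_atTop (4 * (|a| + c') + 4)] with r hEr hr1 hrbig
    have hr0 : (0:ℝ) < r := by linarith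
    have hrne : r ≠ 0 := ne_of_gt hr0
    have hc'0 : 0 ≤ c' := abs_nonneg c
    have ha0 : 0 ≤ |a| := abs_nonneg a
    set g : ℝ := 1 + u r ^ 2 * ((1 + r ^ 2) * f' r ^ 2 + V r) with hgdef
    set E : ℝ := g - (r ^ 2 + 2 * a * r) with hEdef
    have hgE : g = r ^ 2 + 2 * a * r + E := by rw [hEdef]; ring
    have hPpos : (0:ℝ) < r ^ ε := Real.rpow_pos_of_pos hr0 ε
    have hP1 : (1:ℝ) ≤ r ^ ε := by
      have := Real.rpow_le_rpow_of_exponent_le hr1 hε0.le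
      rwa [Real.rpow_zero] at this
    have hE : |E| ≤ c' * r ^ ε := by
      rw [Real.norm_eq_abs, Real.norm_eq_abs, abs_of_pos hPpos] at hEr
      calc |E| ≤ c * r ^ ε := hEr
        _ ≤ c' * r ^ ε := by nlinarith [le_abs_self c]
    have hrε : r ^ ε ≤ r := by
      calc r ^ ε ≤ r ^ (1:ℝ) := Real.rpow_le_rpow_of_exponent_le hr1 (by linarith)
        _ = r := Real.rpow_one r
    have hEr' : |E| ≤ c' * r := le_trans hE (by nlinarith)
    have hEneg : -(c' * r) ≤ E := by
      have := neg_abs_le E; linarith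
    have hEpos : E ≤ c' * r := le_trans (le_abs_self E) hEr'
    have hsmall : |a| + c' ≤ r / 4 := by linarith
    have hg_lb : r ^ 2 / 4 ≤ g := by
      rw [hgE]
      nlinarith [mul_le_mul_of_nonneg_right (neg_abs_le a) hr0.le,
        mul_le_mul_of_nonneg_right hsmall hr0.le]
    have hg0 : (0:ℝ) < g := by nlinarith
    have hsq : 0 < Real.sqrt g := Real.sqrt_pos.mpr hg0
    set x : ℝ := (Real.sqrt g)⁻¹ with hxdef
    have hx0 : 0 < x := by positivity
    have hx2 : x ^ 2 = g⁻¹ := by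
      rw [hxdef, inv_pow, Real.sq_sqrt hg0.le]
    set hfn : ℝ := 1 / r - a / r ^ 2 with hhdef
    have hale : a ≤ r / 2 := le_trans (le_abs_self a) (by linarith)
    have hage : -(r) ≤ a := by
      have := neg_abs_le a; linarith
    have hh_lb : 1 / (2 * r) ≤ hfn := by
      have key : hfn - 1 / (2 * r) = (r - 2 * a) / (2 * r ^ 2) := by
        rw [hhdef]; field_simp; ring
      have : (0:ℝ) ≤ (r - 2 * a) / (2 * r ^ 2) := by
        apply div_nonneg (by linarith) (by positivity)
      linarith
    have hh_ub : hfn ≤ 2 / r := by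
      have key : 2 / r - hfn = (r + a) / r ^ 2 := by
        rw [hhdef]; field_simp; ring
      have : (0:ℝ) ≤ (r + a) / r ^ 2 := by
        apply div_nonneg (by linarith) (by positivity)
      linarith
    have hh0 : 0 < hfn := lt_of_lt_of_le (by positivity) hh_lb
    -- step A
    have stepA : |x - hfn| ≤ 2 * r * |x ^ 2 - hfn ^ 2| := by
      have hxh : 1 / (2 * r) ≤ x + hfn := by linarith
      have e1 : |x - hfn| * (x + hfn) = |x ^ 2 - hfn ^ 2| := by
        rw [← abs_of_pos (show (0:ℝ) < x + hfn by linarith [hh0, hx0]), ← abs_mul]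
        congr 1; ring
      have e2 : |x - hfn| * (1 / (2 * r)) ≤ |x ^ 2 - hfn ^ 2| := by
        rw [← e1]
        exact mul_le_mul_of_nonneg_left hxh (abs_nonneg _)
      have := mul_le_mul_of_nonneg_right e2 (show (0:ℝ) ≤ 2 * r by linarith)
      calc |x - hfn| = |x - hfn| * (1 / (2 * r)) * (2 * r) := by field_simp
        _ ≤ |x ^ 2 - hfn ^ 2| * (2 * r) := this
        _ = 2 * r * |x ^ 2 - hfn ^ 2| := by ring
    -- step B
    set B : ℝ := |1 - g * hfn ^ 2| with hBdef
    have stepB : |x ^ 2 - hfn ^ 2| ≤ 4 / r ^ 2 * B := by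
      have e1 : x ^ 2 - hfn ^ 2 = (1 - g * hfn ^ 2) / g := by
        rw [hx2]; field_simp
      rw [e1, abs_div, abs_of_pos hg0]
      have e2 : |1 - g * hfn ^ 2| / g ≤ |1 - g * hfn ^ 2| / (r ^ 2 / 4) :=
        div_le_div_of_nonneg_left (abs_nonneg _) (by positivity) hg_lb
      calc |1 - g * hfn ^ 2| / g ≤ |1 - g * hfn ^ 2| / (r ^ 2 / 4) := e2
        _ = 4 / r ^ 2 * B := by rw [hBdef]; field_simp
    -- step C
    have hh2 : hfn ^ 2 ≤ 4 / r ^ 2 := by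
      have h1 : hfn ^ 2 ≤ (2 / r) ^ 2 := pow_le_pow_left₀ hh0.le hh_ub 2
      have h2 : (2 / r : ℝ) ^ 2 = 4 / r ^ 2 := by field_simp; ring
      linarith
    have stepC : B ≤ (3 * a ^ 2 + 2 * |a| ^ 3 + 4 * c') * (r ^ ε / r ^ 2) := by
      have hid2 : 1 - g * hfn ^ 2 = (3 * a ^ 2 / r ^ 2 - 2 * a ^ 3 / r ^ 3) - E * hfn ^ 2 := by
        rw [hgE, hhdef]; field_simp; ring
      have b1 : |3 * a ^ 2 / r ^ 2 - 2 * a ^ 3 / r ^ 3| ≤ (3 * a ^ 2 + 2 * |a| ^ 3) / r ^ 2 := by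
        have c1 : |3 * a ^ 2 / r ^ 2| = 3 * a ^ 2 / r ^ 2 := abs_of_nonneg (by positivity)
        have c2 : |2 * a ^ 3 / r ^ 3| ≤ 2 * |a| ^ 3 / r ^ 2 := by
          rw [abs_div, abs_of_pos (by positivity : (0:ℝ) < r ^ 3),
            show |2 * a ^ 3| = 2 * |a| ^ 3 by rw [abs_mul, abs_pow]; norm_num]
          exact div_le_div_of_nonneg_left (by positivity) (by positivity) (by nlinarith)
        calc |3 * a ^ 2 / r ^ 2 - 2 * a ^ 3 / r ^ 3|
            ≤ |3 * a ^ 2 / r ^ 2| + |2 * a ^ 3 / r ^ 3| := abs_sub _ _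
          _ ≤ 3 * a ^ 2 / r ^ 2 + 2 * |a| ^ 3 / r ^ 2 := by rw [c1]; linarith
          _ = (3 * a ^ 2 + 2 * |a| ^ 3) / r ^ 2 := by ring
      have b2 : |E * hfn ^ 2| ≤ c' * r ^ ε * (4 / r ^ 2) := by
        rw [abs_mul, abs_of_nonneg (by positivity : (0:ℝ) ≤ hfn ^ 2)]
        apply mul_le_mul hE hh2 (by positivity) (by positivity)
      have b3 : (3 * a ^ 2 + 2 * |a| ^ 3) / r ^ 2 ≤ (3 * a ^ 2 + 2 * |a| ^ 3) * (r ^ ε / r ^ 2) := by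
        have hdd : (1:ℝ) / r ^ 2 ≤ r ^ ε / r ^ 2 :=
          (div_le_div_iff_of_pos_right (by positivity : (0:ℝ) < r ^ 2)).mpr hP1
        calc (3 * a ^ 2 + 2 * |a| ^ 3) / r ^ 2
            = (3 * a ^ 2 + 2 * |a| ^ 3) * (1 / r ^ 2) := by ring
          _ ≤ (3 * a ^ 2 + 2 * |a| ^ 3) * (r ^ ε / r ^ 2) :=
              mul_le_mul_of_nonneg_left hdd (by positivity)
      calc B = |(3 * a ^ 2 / r ^ 2 - 2 * a ^ 3 / r ^ 3) - E * hfn ^ 2| := by rw [hBdef, hid2]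
        _ ≤ |3 * a ^ 2 / r ^ 2 - 2 * a ^ 3 / r ^ 3| + |E * hfn ^ 2| := abs_sub _ _
        _ ≤ (3 * a ^ 2 + 2 * |a| ^ 3) / r ^ 2 + c' * r ^ ε * (4 / r ^ 2) := by linarith
        _ ≤ (3 * a ^ 2 + 2 * |a| ^ 3) * (r ^ ε / r ^ 2) + 4 * c' * (r ^ ε / r ^ 2) := by
            linarith [b3, show c' * r ^ ε * (4 / r ^ 2) = 4 * c' * (r ^ ε / r ^ 2) from by ring]
        _ = (3 * a ^ 2 + 2 * |a| ^ 3 + 4 * c') * (r ^ ε / r ^ 2) := by ring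
    -- combine
    have hrpow : r ^ ε / r ^ 3 = r ^ (-3 + ε) := by
      rw [Real.rpow_add hr0, show ((-3):ℝ) = -(3:ℝ) by norm_num, Real.rpow_neg hr0.le,
        show (3:ℝ) = ((3:ℕ):ℝ) by norm_num, Real.rpow_natCast]
      ring
    calc |x - hfn| ≤ 2 * r * |x ^ 2 - hfn ^ 2| := stepA
      _ ≤ 2 * r * (4 / r ^ 2 * B) := by
          apply mul_le_mul_of_nonneg_left stepB (by linarith)
      _ ≤ 2 * r * (4 / r ^ 2 * ((3 * a ^ 2 + 2 * |a| ^ 3 + 4 * c') * (r ^ ε / r ^ 2))) := by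
          apply mul_le_mul_of_nonneg_left
            (mul_le_mul_of_nonneg_left stepC (by positivity)) (by linarith)
      _ = 8 * (3 * a ^ 2 + 2 * |a| ^ 3 + 4 * c') * (r ^ ε / r ^ 3) := by
          have gen : ∀ K P : ℝ, 2 * r * (4 / r ^ 2 * (K * (P / r ^ 2))) = 8 * K * (P / r ^ 3) := by
            intro K P; field_simp; ring
          exact gen _ _
      _ = 8 * (3 * a ^ 2 + 2 * |a| ^ 3 + 4 * c') * r ^ (-3 + ε) := by rw [hrpow]
  obtain ⟨R, hR⟩ := eventually_atTop.mp hfin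
  exact ⟨8 * (3 * a ^ 2 + 2 * |a| ^ 3 + 4 * c'), R, hR⟩
end

section
/- Let u₀, 𝒜 ∈ ℝ, ε ∈ (0, 1) and r₀ > 0. Suppose u, f : [r₀, ∞) → ℝ are twice differentiable with u(r) = 1 + u₀/r + O(r^{−2+ε}), u′(r) = −u₀/r² + O(r^{−3+ε}), f′(r) = r/√(1 + r²) + 𝒜/r + O(r^{−2+ε}), f″(r) = (1 + r²)^{−3/2} − 𝒜/r² + O(r^{−3+ε}) as r → ∞, and suppose V : [r₀, ∞) → ℝ satisfies V(r) = O(r^{ε}). Define π(r) = [u(r)(f″(r) + (r/(1 + r²)) f′(r)) + 2 u′(r) f′(r)] · [1 + u(r)²((1 + r²) f′(r)² + V(r))]^{−1/2}. Then π(r) = 1/r² − (2u₀ + 𝒜)/r³ + O(r^{−4+ε}) as r → ∞. -/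
open Filter Asymptotics

noncomputable def PP (k : ℝ) : ℝ → ℝ := fun r => r ^ k

lemma PP_le {p q : ℝ} (h : p ≤ q) : PP p =O[atTop] PP q := by
  apply IsBigO.of_bound 1
  filter_upwards [eventually_ge_atTop (1:ℝ)] with r hr
  have hr0 : (0:ℝ) ≤ r := by linarith
  simp only [PP, Real.norm_eq_abs, one_mul, abs_of_nonneg (Real.rpow_nonneg hr0 _)]
  exact Real.rpow_le_rpow_of_exponent_le hr h

lemma OP_le {p q : ℝ} {f : ℝ → ℝ} (hf : f =O[atTop] PP p) (h : p ≤ q) :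
    f =O[atTop] PP q := hf.trans (PP_le h)

lemma OP_mul {p q : ℝ} {f g : ℝ → ℝ} (hf : f =O[atTop] PP p) (hg : g =O[atTop] PP q) :
    (fun r => f r * g r) =O[atTop] PP (p + q) := by
  refine (hf.mul hg).trans (IsBigO.of_bound 1 ?_)
  filter_upwards [eventually_gt_atTop (0:ℝ)] with r hr
  simp only [PP, Real.norm_eq_abs, one_mul, ← Real.rpow_add hr,
    abs_of_nonneg (Real.rpow_nonneg hr.le _), le_refl]

lemma bigO_of_bound {f : ℝ → ℝ} {k : ℝ} (C R : ℝ) (h : ∀ r ≥ R, |f r| ≤ C * r ^ k) :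
    f =O[atTop] PP k := by
  apply IsBigO.of_bound C
  filter_upwards [eventually_ge_atTop R, eventually_ge_atTop (1:ℝ)] with r h1 h2
  simpa [PP, Real.norm_eq_abs, abs_of_nonneg (Real.rpow_nonneg (by linarith : (0:ℝ) ≤ r) k)]
    using h r h1

lemma bound_of_bigO {f : ℝ → ℝ} {k : ℝ} (h : f =O[atTop] PP k) :
    ∃ C R, ∀ r ≥ R, |f r| ≤ C * r ^ k := by
  obtain ⟨c, hc⟩ := h.bound
  obtain ⟨R, hR⟩ := eventually_atTop.1 (hc.and (eventually_ge_atTop (1:ℝ)))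
  refine ⟨c, R, fun r hr => ?_⟩
  obtain ⟨h1, h2⟩ := hR r hr
  simpa [PP, Real.norm_eq_abs,
    abs_of_nonneg (Real.rpow_nonneg (by linarith : (0:ℝ) ≤ r) k)] using h1

lemma OP_congr {k : ℝ} {f g : ℝ → ℝ} (h : f =O[atTop] PP k) (e : ∀ r, f r = g r) :
    g =O[atTop] PP k := by
  have : f = g := funext e
  rwa [← this]

lemma OP_congr' {k : ℝ} {f g : ℝ → ℝ} (h : f =O[atTop] PP k)
    (e : ∀ᶠ r in atTop, f r = g r) : g =O[atTop] PP k :=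
  h.congr' e EventuallyEq.rfl

lemma rpow_neg_nat (r : ℝ) (hr : 0 ≤ r) (n : ℕ) : r ^ (-(n:ℝ)) = (r ^ n)⁻¹ := by
  rw [Real.rpow_neg hr, Real.rpow_natCast]

lemma ratO (c : ℝ) (n : ℕ) : (fun r : ℝ => c / r ^ n) =O[atTop] PP (-(n:ℝ)) := by
  apply bigO_of_bound |c| 1
  intro r hr
  have hr0 : (0:ℝ) < r := by linarith
  rw [rpow_neg_nat r hr0.le, abs_div, abs_of_nonneg (by positivity : (0:ℝ) ≤ r ^ n),
    div_eq_mul_inv]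

lemma s_ge (r : ℝ) (hr : 0 ≤ r) : r ≤ Real.sqrt (1 + r ^ 2) := by
  have h1 : (0:ℝ) ≤ 1 + r ^ 2 := by positivity
  nlinarith [Real.sq_sqrt h1, Real.sqrt_nonneg (1 + r ^ 2)]

lemma s_le (r : ℝ) (hr : 0 ≤ r) : Real.sqrt (1 + r ^ 2) ≤ 1 + r := by
  rw [show (1:ℝ) + r = Real.sqrt ((1+r)^2) from (Real.sqrt_sq (by linarith)).symm]
  exact Real.sqrt_le_sqrt (by nlinarith)

lemma s_sub (r : ℝ) (hr : 0 < r) : Real.sqrt (1 + r ^ 2) - r ≤ 1 / (2 * r) := by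
  have h1 : (0:ℝ) ≤ 1 + r ^ 2 := by positivity
  have h2 := Real.sq_sqrt h1
  have h3 := s_ge r hr.le
  rw [div_eq_inv_mul, inv_mul_eq_div, le_div_iff₀ (by linarith : (0:ℝ) < 2*r)]
  nlinarith

lemma rpow_neg_three_half (r : ℝ) :
    (1 + r ^ 2) ^ (-(3:ℝ)/2) = ((1 + r ^ 2) * Real.sqrt (1 + r ^ 2))⁻¹ := by
  have h : (0:ℝ) < 1 + r ^ 2 := by positivity
  rw [show (-(3:ℝ)/2) = -(3/2) by ring, Real.rpow_neg h.le]
  congr 1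
  rw [show (3:ℝ)/2 = 1 + 1/2 by norm_num, Real.rpow_add h, Real.rpow_one,
    Real.sqrt_eq_rpow]

lemma sqrt_one_add_sub (x : ℝ) (hx : 0 ≤ 1 + x) : |Real.sqrt (1 + x) - 1| ≤ |x| := by
  have h := Real.sq_sqrt hx
  have hn := Real.sqrt_nonneg (1 + x)
  set t := Real.sqrt (1 + x)
  have hx' : x = (t - 1) * (t + 1) := by nlinarith
  calc |t - 1| = |t - 1| * 1 := (mul_one _).symm
    _ ≤ |t - 1| * |t + 1| := by
        apply mul_le_mul_of_nonneg_left _ (abs_nonneg _)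
        rw [abs_of_nonneg (by linarith : (0:ℝ) ≤ t + 1)]; linarith
    _ = |x| := by rw [← abs_mul, ← hx']
lemma OP_mul' {p q k : ℝ} {f g : ℝ → ℝ} (hf : f =O[atTop] PP p) (hg : g =O[atTop] PP q)
    (h : p + q = k) : (fun r => f r * g r) =O[atTop] PP k := h ▸ OP_mul hf hg

lemma ratO' (c : ℝ) (n : ℕ) (k : ℝ) (h : k = -(n:ℝ)) :
    (fun r : ℝ => c / r ^ n) =O[atTop] PP k := h ▸ ratO c n

lemma affine_O (a b : ℝ) : (fun r : ℝ => a + b / r) =O[atTop] PP 0 := by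
  apply bigO_of_bound (|a| + |b|) 1
  intro r hr
  have hr0 : (0:ℝ) < r := by linarith
  rw [Real.rpow_zero, mul_one]
  calc |a + b/r| ≤ |a| + |b/r| := abs_add_le _ _
    _ ≤ |a| + |b| := by
        have hb : |b/r| ≤ |b| := by
          rw [abs_div, abs_of_nonneg hr0.le]
          exact div_le_self (abs_nonneg _) hr
        linarith

lemma lin_O (a : ℝ) : (fun r : ℝ => r + a) =O[atTop] PP 1 := by
  apply bigO_of_bound (1 + |a|) 1
  intro r hr
  have hr0 : (0:ℝ) < r := by linarith
  rw [Real.rpow_one]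
  calc |r + a| ≤ |r| + |a| := abs_add_le _ _
    _ = r + |a| := by rw [abs_of_nonneg hr0.le]
    _ ≤ (1 + |a|) * r := by nlinarith [abs_nonneg a]

lemma sqrt_O : (fun r : ℝ => Real.sqrt (1 + r ^ 2)) =O[atTop] PP 1 := by
  apply bigO_of_bound 2 1
  intro r hr
  have hr0 : (0:ℝ) < r := by linarith
  rw [Real.rpow_one, abs_of_nonneg (Real.sqrt_nonneg _)]
  calc Real.sqrt (1 + r^2) ≤ 1 + r := s_le r hr0.le
    _ ≤ 2 * r := by linarith

lemma base2_O (A : ℝ) : (fun r : ℝ => r / Real.sqrt (1 + r ^ 2) + A / r) =O[atTop] PP 0 := by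
  apply bigO_of_bound (1 + |A|) 1
  intro r hr
  have hr0 : (0:ℝ) < r := by linarith
  have hs0 : (0:ℝ) < Real.sqrt (1 + r^2) := Real.sqrt_pos.2 (by positivity)
  rw [Real.rpow_zero, mul_one]
  calc |r / Real.sqrt (1+r^2) + A/r| ≤ |r / Real.sqrt (1+r^2)| + |A/r| := abs_add_le _ _
    _ ≤ 1 + |A| := by
        have h1 : |r / Real.sqrt (1+r^2)| ≤ 1 := by
          rw [abs_of_nonneg (div_nonneg hr0.le hs0.le), div_le_one hs0]
          exact s_ge r hr0.le
        have h2 : |A/r| ≤ |A| := by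
          rw [abs_div, abs_of_nonneg hr0.le]
          exact div_le_self (abs_nonneg _) hr
        linarith

lemma rinv_O : (fun r : ℝ => r / (1 + r ^ 2)) =O[atTop] PP (-1) := by
  apply bigO_of_bound 1 1
  intro r hr
  have hr0 : (0:ℝ) < r := by linarith
  rw [show (-1:ℝ) = -((1:ℕ):ℝ) by norm_num, rpow_neg_nat r hr0.le, pow_one, one_mul]
  rw [abs_of_nonneg (by positivity : (0:ℝ) ≤ r / (1+r^2))]
  rw [div_le_iff₀ (by positivity), inv_mul_eq_div, le_div_iff₀ hr0]
  nlinarith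

lemma bound1 (A : ℝ) : (fun r : ℝ => r / Real.sqrt (1 + r ^ 2) + A / r - 1) =O[atTop] PP (-1) := by
  apply bigO_of_bound (1 + |A|) 1
  intro r hr
  have hr0 : (0:ℝ) < r := by linarith
  have hs0 : (0:ℝ) < Real.sqrt (1 + r^2) := Real.sqrt_pos.2 (by positivity)
  have hge := s_ge r hr0.le
  have hsub := s_sub r hr0
  rw [show (-1:ℝ) = -((1:ℕ):ℝ) by norm_num, rpow_neg_nat r hr0.le, pow_one]
  have e1 : r / Real.sqrt (1+r^2) + A/r - 1
      = -((Real.sqrt (1+r^2) - r)/Real.sqrt (1+r^2)) + A/r := by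
    field_simp
    ring
  rw [e1]
  calc |-((Real.sqrt (1+r^2) - r)/Real.sqrt (1+r^2)) + A/r|
      ≤ |-((Real.sqrt (1+r^2) - r)/Real.sqrt (1+r^2))| + |A/r| := abs_add_le _ _
    _ = (Real.sqrt (1+r^2) - r)/Real.sqrt (1+r^2) + |A|/r := by
        rw [abs_neg, abs_of_nonneg (div_nonneg (by linarith) hs0.le), abs_div,
          abs_of_nonneg hr0.le]
    _ ≤ (1/(2*r))/r + |A|/r := by gcongr <;> linarith
    _ ≤ 1/r + |A|/r := by
        have h3 : 1/(2*r)/r ≤ 1/r := by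
          rw [div_div, div_le_div_iff₀ (by positivity) hr0]
          nlinarith
        linarith
    _ = (1 + |A|) * r⁻¹ := by field_simp

lemma bound2 (A : ℝ) :
    (fun r : ℝ => Real.sqrt (1 + r ^ 2) * (r / Real.sqrt (1 + r ^ 2) + A / r) - (r + A))
      =O[atTop] PP (-2) := by
  apply bigO_of_bound |A| 1
  intro r hr
  have hr0 : (0:ℝ) < r := by linarith
  have hs0 : (0:ℝ) < Real.sqrt (1 + r^2) := Real.sqrt_pos.2 (by positivity)
  have hge := s_ge r hr0.le
  have hsub := s_sub r hr0
  rw [show (-2:ℝ) = -((2:ℕ):ℝ) by norm_num, rpow_neg_nat r hr0.le]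
  have e1 : Real.sqrt (1+r^2) * (r / Real.sqrt (1+r^2) + A/r) - (r + A)
      = A * ((Real.sqrt (1+r^2) - r)/r) := by
    field_simp
    ring
  rw [e1, abs_mul, abs_div, abs_of_nonneg hr0.le,
    abs_of_nonneg (show (0:ℝ) ≤ Real.sqrt (1+r^2) - r by linarith)]
  calc |A| * ((Real.sqrt (1+r^2) - r)/r) ≤ |A| * ((1/(2*r))/r) := by gcongr
    _ ≤ |A| * (r^2)⁻¹ := by
        refine mul_le_mul_of_nonneg_left ?_ (abs_nonneg _)
        rw [div_div, one_div]
        refine inv_anti₀ (by positivity) (by nlinarith)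

lemma boundT (A : ℝ) :
    (fun r : ℝ => (1 + r ^ 2) ^ (-(3:ℝ)/2) - A / r ^ 2
      + (r / (1 + r ^ 2)) * (r / Real.sqrt (1 + r ^ 2) + A / r) - 1 / r)
      =O[atTop] PP (-3) := by
  apply bigO_of_bound (1 + |A|) 1
  intro r hr
  have hr0 : (0:ℝ) < r := by linarith
  have hs0 : (0:ℝ) < Real.sqrt (1 + r^2) := Real.sqrt_pos.2 (by positivity)
  have hge := s_ge r hr0.le
  have hsub := s_sub r hr0
  have hrp : r ^ (-3:ℝ) = (r^3)⁻¹ := by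
    rw [show (-3:ℝ) = -((3:ℕ):ℝ) by norm_num, rpow_neg_nat r hr0.le]
  rw [hrp]
  have e1 : (1 + r^2) ^ (-(3:ℝ)/2) - A/r^2 + (r/(1+r^2)) * (r/Real.sqrt (1+r^2) + A/r) - 1/r
      = (1/Real.sqrt (1+r^2) - 1/r) + (-A) * (1/(r^2 * (1+r^2))) := by
    rw [rpow_neg_three_half]
    field_simp
    all_goals first
      | ring1
      | (left; ring1)
      | simp
  rw [e1]
  have e2 : 1/Real.sqrt (1+r^2) - 1/r = -((Real.sqrt (1+r^2) - r)/(r * Real.sqrt (1+r^2))) := by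
    field_simp
    all_goals first
      | ring1
      | (left; ring1)
      | simp
  have h2 : |1/Real.sqrt (1+r^2) - 1/r| ≤ 1/r^3 := by
    rw [e2]
    rw [abs_neg, abs_of_nonneg (div_nonneg (by linarith) (by positivity))]
    calc (Real.sqrt (1+r^2) - r)/(r * Real.sqrt (1+r^2)) ≤ (1/(2*r))/(r * r) := by
          refine div_le_div₀ (by positivity) hsub (by positivity) ?_
          nlinarith
      _ ≤ 1/r^3 := by
          rw [div_div, one_div, one_div]
          refine inv_anti₀ (by positivity) (by nlinarith)
  calc |(1/Real.sqrt (1+r^2) - 1/r) + (-A) * (1/(r^2 * (1+r^2)))|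
      ≤ |1/Real.sqrt (1+r^2) - 1/r| + |(-A) * (1/(r^2 * (1+r^2)))| := abs_add_le _ _
    _ ≤ 1/r^3 + |A| * (1/r^3) := by
        rw [abs_mul, abs_neg, abs_of_nonneg (by positivity : (0:ℝ) ≤ 1/(r^2*(1+r^2)))]
        refine add_le_add h2 (mul_le_mul_of_nonneg_left ?_ (abs_nonneg _))
        have h4 : r^3 ≤ r^2*(1+r^2) := by nlinarith [sq_nonneg (r-1), sq_nonneg r]
        rw [div_le_div_iff₀ (by positivity) (by positivity)]
        nlinarith [h4]
    _ = (1 + |A|) * (r^3)⁻¹ := by field_simp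
-- pure rational O-facts
lemma n0_O (c d : ℝ) : (fun r : ℝ => c / r + d / r ^ 2) =O[atTop] PP (-1) := by
  apply bigO_of_bound (|c| + |d|) 1
  intro r hr
  have hr0 : (0:ℝ) < r := by linarith
  rw [show (-1:ℝ) = -((1:ℕ):ℝ) by norm_num, rpow_neg_nat r hr0.le, pow_one]
  calc |c/r + d/r^2| ≤ |c/r| + |d/r^2| := abs_add_le _ _
    _ = |c|/r + |d|/r^2 := by
        rw [abs_div, abs_div, abs_of_nonneg hr0.le, abs_of_nonneg (by positivity : (0:ℝ) ≤ r^2)]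
    _ ≤ |c|/r + |d|/r := by
        gcongr
        nlinarith
    _ = (|c| + |d|) * r⁻¹ := by field_simp

lemma g0sq_O (b : ℝ) : (fun r : ℝ => (1 / r - b / r ^ 2) ^ 2) =O[atTop] PP (-2) := by
  apply bigO_of_bound ((1 + |b|)^2) 1
  intro r hr
  have hr0 : (0:ℝ) < r := by linarith
  rw [show (-2:ℝ) = -((2:ℕ):ℝ) by norm_num, rpow_neg_nat r hr0.le]
  have h1 : |1/r - b/r^2| ≤ (1+|b|)/r := by
    calc |1/r - b/r^2| ≤ |1/r| + |b/r^2| := abs_sub _ _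
      _ = 1/r + |b|/r^2 := by
          rw [abs_div, abs_div, abs_one, abs_of_nonneg hr0.le,
            abs_of_nonneg (by positivity : (0:ℝ) ≤ r^2)]
      _ ≤ 1/r + |b|/r := by
          gcongr
          nlinarith
      _ = (1+|b|)/r := by ring
  calc |(1/r - b/r^2)^2| = |1/r - b/r^2|^2 := abs_pow _ 2
    _ ≤ ((1+|b|)/r)^2 := pow_le_pow_left₀ (abs_nonneg _) h1 2
    _ = (1+|b|)^2 * (r^2)⁻¹ := by rw [div_pow]; ring

lemma pure_delta_O (b : ℝ) :
    (fun r : ℝ => (1 / r - b / r ^ 2) ^ 2 * (r ^ 2 + 2 * b * r) - 1) =O[atTop] PP (-2) := by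
  have h1 := (ratO' (-3*b^2) 2 (-2) (by norm_num)).add
    (OP_le (ratO' (2*b^3) 3 (-3) (by norm_num)) (by norm_num))
  apply OP_congr' h1
  filter_upwards [eventually_gt_atTop (0:ℝ)] with r hr
  field_simp
  ring

lemma pure_D_O (u₀ A : ℝ) :
    (fun r : ℝ => 1 + (1 + 2 * u₀ / r) * (r + A) ^ 2 - r ^ 2 - 2 * (u₀ + A) * r)
      =O[atTop] PP 0 := by
  apply OP_congr' (affine_O (1 + A^2 + 4*u₀*A) (2*u₀*A^2))
  filter_upwards [eventually_gt_atTop (0:ℝ)] with r hr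
  field_simp
  ring

lemma pure_final_O (u₀ b : ℝ) :
    (fun r : ℝ => (1 / r - u₀ / r ^ 2) * (1 / r - b / r ^ 2) - (1 / r ^ 2 - (u₀ + b) / r ^ 3))
      =O[atTop] PP (-4) := by
  apply OP_congr' (ratO' (u₀*b) 4 (-4) (by norm_num))
  filter_upwards [eventually_gt_atTop (0:ℝ)] with r hr
  field_simp
  ring

lemma sq_lin_O (A : ℝ) : (fun r : ℝ => (r + A) ^ 2) =O[atTop] PP 2 := by
  have := OP_mul' (lin_O A) (lin_O A) (by norm_num : (1:ℝ) + 1 = 2)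
  apply OP_congr this
  intro r
  ring
set_option maxHeartbeats 2000000 in
/-- Expansion (07): π_rr = 1/r² − (2u₀ + 𝒜)/r³ + O(r^{−4+ε}) for the radial-radial
component π(r) = [u(f″ + (r/(1+r²))f′) + 2u′f′]·(1 + u²((1+r²)f′² + V))^{−1/2}
of the second fundamental form of the Jang graph. -/
theorem stmt_7 (u₀ 𝒜 ε r₀ : ℝ) (hε : ε ∈ Set.Ioo (0 : ℝ) 1) (hr₀ : 0 < r₀)
    (u u' f f' f'' V : ℝ → ℝ)
    (hud : ∀ r ≥ r₀, HasDerivAt u (u' r) r)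
    (hfd : ∀ r ≥ r₀, HasDerivAt f (f' r) r)
    (hfd' : ∀ r ≥ r₀, HasDerivAt f' (f'' r) r)
    (hu : ∃ C R, ∀ r ≥ R, |u r - (1 + u₀ / r)| ≤ C * r ^ (-2 + ε))
    (hu' : ∃ C R, ∀ r ≥ R, |u' r - (-u₀ / r ^ 2)| ≤ C * r ^ (-3 + ε))
    (hf' : ∃ C R, ∀ r ≥ R,
      |f' r - (r / Real.sqrt (1 + r ^ 2) + 𝒜 / r)| ≤ C * r ^ (-2 + ε))
    (hf'' : ∃ C R, ∀ r ≥ R,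
      |f'' r - ((1 + r ^ 2) ^ (-(3 : ℝ) / 2) - 𝒜 / r ^ 2)| ≤ C * r ^ (-3 + ε))
    (hV : ∃ C R, ∀ r ≥ R, |V r| ≤ C * r ^ ε) :
    ∃ C R, ∀ r ≥ R,
      |(u r * (f'' r + (r / (1 + r ^ 2)) * f' r) + 2 * u' r * f' r) *
          (Real.sqrt (1 + u r ^ 2 * ((1 + r ^ 2) * f' r ^ 2 + V r)))⁻¹ -
        (1 / r ^ 2 - (2 * u₀ + 𝒜) / r ^ 3)| ≤ C * r ^ (-4 + ε) := by
  obtain ⟨hε0, hε1⟩ := hε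
  have Oeu : (fun r => u r - (1 + u₀ / r)) =O[atTop] PP (-2+ε) := by
    obtain ⟨C, R, h⟩ := hu; exact bigO_of_bound C R h
  have Oeu' : (fun r => u' r - (-u₀ / r ^ 2)) =O[atTop] PP (-3+ε) := by
    obtain ⟨C, R, h⟩ := hu'; exact bigO_of_bound C R h
  have Oe1 : (fun r => f' r - (r / Real.sqrt (1 + r ^ 2) + 𝒜 / r)) =O[atTop] PP (-2+ε) := by
    obtain ⟨C, R, h⟩ := hf'; exact bigO_of_bound C R h
  have Oe2 : (fun r => f'' r - ((1 + r ^ 2) ^ (-(3:ℝ)/2) - 𝒜 / r ^ 2)) =O[atTop] PP (-3+ε) := by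
    obtain ⟨C, R, h⟩ := hf''; exact bigO_of_bound C R h
  have OV : V =O[atTop] PP ε := by
    obtain ⟨C, R, h⟩ := hV; exact bigO_of_bound C R h
  have Obase : (fun r : ℝ => 1 + u₀ / r) =O[atTop] PP 0 := affine_O 1 u₀
  have Ou : u =O[atTop] PP 0 :=
    OP_congr ((OP_le Oeu (by linarith)).add Obase) (fun r => by ring)
  have Of' : f' =O[atTop] PP 0 :=
    OP_congr ((OP_le Oe1 (by linarith)).add (base2_O 𝒜)) (fun r => by ring)
  have Of'1 : (fun r => f' r - 1) =O[atTop] PP (-1) :=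
    OP_congr ((OP_le Oe1 (by linarith)).add (bound1 𝒜)) (fun r => by ring)
  have Orinv : (fun r : ℝ => r⁻¹) =O[atTop] PP (-1) :=
    OP_congr (ratO' 1 1 (-1) (by norm_num)) (fun r => by rw [pow_one, one_div])
  -- numerator
  have OA : (fun r => f'' r + (r / (1 + r ^ 2)) * f' r - 1 / r) =O[atTop] PP (-3+ε) := by
    have h1 := OP_mul' rinv_O Oe1 (by ring : (-1:ℝ) + (-2+ε) = -3+ε)
    have h2 := OP_le (boundT 𝒜) (by linarith : (-3:ℝ) ≤ -3+ε)
    exact OP_congr ((OP_le Oe2 le_rfl).add (h1.add h2)) (fun r => by ring)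
  have OA0 : (fun r => f'' r + (r / (1 + r ^ 2)) * f' r) =O[atTop] PP (-1) :=
    OP_congr ((OP_le OA (by linarith)).add (n0_O 1 0)) (fun r => by ring)
  have OuA : (fun r => u r * (f'' r + (r / (1 + r ^ 2)) * f' r) - (1 / r + u₀ / r ^ 2))
      =O[atTop] PP (-3+ε) := by
    have h1 := OP_mul' Obase OA (by ring : (0:ℝ) + (-3+ε) = -3+ε)
    have h2 := OP_mul' Oeu OA0 (by ring : (-2+ε) + (-1:ℝ) = -3+ε)
    refine OP_congr' (h1.add h2) ?_
    filter_upwards [eventually_gt_atTop (0:ℝ)] with r hr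
    field_simp
    ring
  have Ouf : (fun r => 2 * u' r * f' r + 2 * u₀ / r ^ 2) =O[atTop] PP (-3+ε) := by
    have h1 := (OP_mul' Oeu' Of' (by ring : (-3+ε) + (0:ℝ) = -3+ε)).const_mul_left 2
    have h2 := OP_le (OP_mul' (ratO' (-2*u₀) 2 (-2) (by norm_num)) Of'1
      (by norm_num : (-2:ℝ) + -1 = -3)) (by linarith : (-3:ℝ) ≤ -3+ε)
    refine OP_congr' (h1.add h2) ?_
    filter_upwards [eventually_gt_atTop (0:ℝ)] with r hr
    field_simp
    ring
  have ON : (fun r => u r * (f'' r + (r / (1 + r ^ 2)) * f' r) + 2 * u' r * f' r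
      - (1 / r - u₀ / r ^ 2)) =O[atTop] PP (-3+ε) :=
    OP_congr (OuA.add Ouf) (fun r => by ring)
  have ON0 : (fun r => u r * (f'' r + (r / (1 + r ^ 2)) * f' r) + 2 * u' r * f' r)
      =O[atTop] PP (-1) :=
    OP_congr ((OP_le ON (by linarith)).add (n0_O 1 (-u₀))) (fun r => by ring)
  -- denominator
  have Osf : (fun r => Real.sqrt (1 + r ^ 2) * f' r - (r + 𝒜)) =O[atTop] PP (-1+ε) := by
    have h1 := OP_mul' sqrt_O Oe1 (by ring : (1:ℝ) + (-2+ε) = -1+ε)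
    have h2 := OP_le (bound2 𝒜) (by linarith : (-2:ℝ) ≤ -1+ε)
    exact OP_congr (h1.add h2) (fun r => by ring)
  have Osf0 : (fun r => Real.sqrt (1 + r ^ 2) * f' r + (r + 𝒜)) =O[atTop] PP 1 :=
    OP_congr ((OP_le Osf (by linarith)).add ((lin_O 𝒜).const_mul_left 2))
      (fun r => by ring)
  have Osq : (fun r => (1 + r ^ 2) * f' r ^ 2 - (r + 𝒜) ^ 2) =O[atTop] PP ε := by
    have h1 := OP_mul' Osf Osf0 (by ring : (-1+ε) + (1:ℝ) = ε)
    refine OP_congr' h1 ?_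
    filter_upwards [eventually_ge_atTop (0:ℝ)] with r hr
    have hs2 : Real.sqrt (1+r^2)^2 = 1+r^2 := Real.sq_sqrt (by positivity)
    linear_combination (f' r)^2 * hs2
  have Ou2 : (fun r => u r ^ 2 - (1 + 2 * u₀ / r)) =O[atTop] PP (-2+ε) := by
    have h1 := OP_mul' Oeu (Ou.add Obase) (by ring : (-2+ε) + (0:ℝ) = -2+ε)
    have h2 := OP_le (ratO' (u₀^2) 2 (-2) (by norm_num)) (by linarith : (-2:ℝ) ≤ -2+ε)
    refine OP_congr' (h1.add h2) ?_
    filter_upwards [eventually_gt_atTop (0:ℝ)] with r hr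
    field_simp
    ring
  have OW : (fun r => ((1 + r ^ 2) * f' r ^ 2 + V r) - (r + 𝒜) ^ 2) =O[atTop] PP ε :=
    OP_congr (Osq.add OV) (fun r => by ring)
  have Ouu : (fun r => u r ^ 2) =O[atTop] PP 0 :=
    OP_congr (OP_mul' Ou Ou (by norm_num : (0:ℝ) + 0 = 0)) (fun r => by ring)
  have OD : (fun r => 1 + u r ^ 2 * ((1 + r ^ 2) * f' r ^ 2 + V r)
      - (r ^ 2 + 2 * (u₀ + 𝒜) * r)) =O[atTop] PP ε := by
    have h1 := OP_mul' Ou2 (sq_lin_O 𝒜) (by ring : (-2+ε) + (2:ℝ) = ε)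
    have h2 := OP_mul' Ouu OW (by ring : (0:ℝ) + ε = ε)
    have h3 := OP_le (pure_D_O u₀ 𝒜) (by linarith : (0:ℝ) ≤ ε)
    exact OP_congr ((h1.add h2).add h3) (fun r => by ring)
  have Oδ : (fun r => (1 / r - (u₀ + 𝒜) / r ^ 2) ^ 2
      * (1 + u r ^ 2 * ((1 + r ^ 2) * f' r ^ 2 + V r)) - 1) =O[atTop] PP (-2+ε) := by
    have h1 := OP_mul' (g0sq_O (u₀ + 𝒜)) OD (by ring : (-2:ℝ) + ε = -2+ε)
    have h2 := OP_le (pure_delta_O (u₀ + 𝒜)) (by linarith : (-2:ℝ) ≤ -2+ε)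
    exact OP_congr (h1.add h2) (fun r => by ring)
  -- inverse square root
  have Oinv : (fun r => (Real.sqrt (1 + u r ^ 2 * ((1 + r ^ 2) * f' r ^ 2 + V r)))⁻¹
      - (1 / r - (u₀ + 𝒜) / r ^ 2)) =O[atTop] PP (-3+ε) := by
    obtain ⟨CD, RD, hD⟩ := bound_of_bigO OD
    have step : (fun r => (Real.sqrt (1 + u r ^ 2 * ((1 + r ^ 2) * f' r ^ 2 + V r)))⁻¹
        - (1 / r - (u₀ + 𝒜) / r ^ 2)) =O[atTop]
        (fun r => ((1 / r - (u₀ + 𝒜) / r ^ 2) ^ 2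
          * (1 + u r ^ 2 * ((1 + r ^ 2) * f' r ^ 2 + V r)) - 1) * r⁻¹) := by
      apply IsBigO.of_bound 2
      filter_upwards [eventually_ge_atTop (1:ℝ), eventually_ge_atTop RD,
        eventually_ge_atTop (4*(|u₀| + |𝒜| + |CD| + 1))] with r hr1 hrD hrB
      simp only [Real.norm_eq_abs]
      have hr0 : (0:ℝ) < r := by linarith
      set Dr := 1 + u r ^ 2 * ((1 + r ^ 2) * f' r ^ 2 + V r) with hDrdef
      set g := 1 / r - (u₀ + 𝒜) / r ^ 2 with hgdef
      have hB1 : (0:ℝ) ≤ |u₀| := abs_nonneg _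
      have hB2 : (0:ℝ) ≤ |𝒜| := abs_nonneg _
      have hB3 : (0:ℝ) ≤ |CD| := abs_nonneg _
      have hb1 : u₀ + 𝒜 ≤ |u₀| + |𝒜| := le_trans (le_abs_self _) (abs_add_le _ _)
      have hb2 : -(|u₀| + |𝒜|) ≤ u₀ + 𝒜 := by
        have h1 := neg_abs_le (u₀ + 𝒜)
        have h2 := abs_add_le u₀ 𝒜
        linarith
      have hE := hD r hrD
      rw [← hDrdef] at hE
      clear_value Dr
      have hrε : r ^ ε ≤ r := by
        calc r ^ ε ≤ r ^ (1:ℝ) := Real.rpow_le_rpow_of_exponent_le hr1 hε1.le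
          _ = r := Real.rpow_one r
      have hEr : CD * r ^ ε ≤ |CD| * r := by
        refine mul_le_mul (le_abs_self _) hrε (Real.rpow_nonneg hr0.le ε) (abs_nonneg _)
      have hElow := (abs_le.1 hE).1
      have hP1 : -(|u₀| + |𝒜|) * r ≤ (u₀ + 𝒜) * r :=
        mul_le_mul_of_nonneg_right hb2 hr0.le
      have hP2 : (2*(|u₀| + |𝒜|) + |CD|) * r ≤ (r/2) * r := by
        apply mul_le_mul_of_nonneg_right _ hr0.le
        linarith
      have hDge : r^2/2 ≤ Dr := by nlinarith
      have hDpos : (0:ℝ) < Dr := by nlinarith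
      have hspos : (0:ℝ) < Real.sqrt Dr := Real.sqrt_pos.2 hDpos
      have hsge : r / 2 ≤ Real.sqrt Dr := by
        rw [show r / 2 = Real.sqrt ((r/2)^2) from (Real.sqrt_sq (by linarith)).symm]
        exact Real.sqrt_le_sqrt (by nlinarith)
      have hinv : (Real.sqrt Dr)⁻¹ ≤ 2 / r := by
        calc (Real.sqrt Dr)⁻¹ ≤ (r/2)⁻¹ := inv_anti₀ (by linarith) hsge
          _ = 2 / r := by rw [inv_div]
      have hgpos : (0:ℝ) < g := by
        have e : g = (r - (u₀ + 𝒜))/r^2 := by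
          rw [hgdef]
          field_simp
        rw [e]
        apply div_pos _ (by positivity)
        linarith
      clear_value g
      have hkey : |Real.sqrt (g^2 * Dr) - 1| ≤ |g^2 * Dr - 1| := by
        have h := sqrt_one_add_sub (g^2 * Dr - 1) (by nlinarith [sq_nonneg g])
        rw [show 1 + (g^2 * Dr - 1) = g^2 * Dr by ring] at h
        exact h
      have hsqrt_mul : Real.sqrt (g^2 * Dr) = g * Real.sqrt Dr := by
        rw [Real.sqrt_mul (sq_nonneg g), Real.sqrt_sq hgpos.le]
      have e2 : (Real.sqrt Dr)⁻¹ - g = (1 - g * Real.sqrt Dr) * (Real.sqrt Dr)⁻¹ := by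
        field_simp
      rw [e2, abs_mul]
      have h1 : |1 - g * Real.sqrt Dr| ≤ |g^2 * Dr - 1| := by
        rw [← hsqrt_mul, abs_sub_comm]
        exact hkey
      have h2 : |(Real.sqrt Dr)⁻¹| ≤ 2 / r := by
        rw [abs_of_nonneg (inv_nonneg.2 (Real.sqrt_nonneg _))]
        exact hinv
      calc |1 - g * Real.sqrt Dr| * |(Real.sqrt Dr)⁻¹|
          ≤ |g^2 * Dr - 1| * (2/r) :=
            mul_le_mul h1 h2 (abs_nonneg _) (abs_nonneg _)
        _ = 2 * |(g^2 * Dr - 1) * r⁻¹| := by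
            rw [abs_mul, abs_of_nonneg (inv_nonneg.2 hr0.le)]
            field_simp
    exact step.trans (OP_mul' Oδ Orinv (by ring : (-2+ε) + (-1:ℝ) = -3+ε))
  have On0 : (fun r : ℝ => 1 / r - u₀ / r ^ 2) =O[atTop] PP (-1) :=
    OP_congr (n0_O 1 (-u₀)) (fun r => by ring)
  have Og0 : (fun r : ℝ => 1 / r - (u₀ + 𝒜) / r ^ 2) =O[atTop] PP (-1) :=
    OP_congr (n0_O 1 (-(u₀ + 𝒜))) (fun r => by ring)
  have Oinvs0 : (fun r => (Real.sqrt (1 + u r ^ 2 * ((1 + r ^ 2) * f' r ^ 2 + V r)))⁻¹)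
      =O[atTop] PP (-1) :=
    OP_congr ((OP_le Oinv (by linarith)).add Og0) (fun r => by ring)
  have final : (fun r => (u r * (f'' r + (r / (1 + r ^ 2)) * f' r) + 2 * u' r * f' r) *
      (Real.sqrt (1 + u r ^ 2 * ((1 + r ^ 2) * f' r ^ 2 + V r)))⁻¹ -
      (1 / r ^ 2 - (2 * u₀ + 𝒜) / r ^ 3)) =O[atTop] PP (-4+ε) := by
    have h1 := OP_mul' ON Oinvs0 (by ring : (-3+ε) + (-1:ℝ) = -4+ε)
    have h2 := OP_mul' On0 Oinv (by ring : (-1:ℝ) + (-3+ε) = -4+ε)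
    have h3 := OP_le (pure_final_O u₀ (u₀ + 𝒜)) (by linarith : (-4:ℝ) ≤ -4+ε)
    refine OP_congr' ((h1.add h2).add h3) ?_
    filter_upwards [eventually_gt_atTop (0:ℝ)] with r hr
    ring
  exact bound_of_bigO final
end

section
/- Let 𝒜, 𝓑, C₁, D₁, D₂, 𝐦 ∈ ℝ and r₀ > 0. Define f₀(r) = √(1 + r²) + 𝒜 log r + 𝓑 + D₁/r + D₂/r² for r ≥ r₀. Suppose G : [r₀, ∞) → ℝ satisfies G(r) = (1 + r²) − 𝐦/r + O(r^{−2}) and H : [r₀, ∞) → ℝ satisfies H(r) = 1 − 2C₁/r + O(r^{−2}) as r → ∞. Then √(G(r) f₀′(r)² + H(r)) = r + 𝒜 + (1 − 2D₁)/(2r) − (2C₁ + 4D₂ + 𝐦)/(2r²) + O(r^{−3}) as r → ∞. -/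
open Filter Asymptotics Real

private lemma aux_sum (f g : ℝ → ℝ) (c : ℝ) (h : ∀ r ≥ (1:ℝ), |f r| ≤ c * |g r|) :
    f =O[atTop] g := by
  apply IsBigO.of_bound c
  filter_upwards [eventually_ge_atTop (1:ℝ)] with r hr
  simpa [Real.norm_eq_abs] using h r hr

private lemma aux_pow (k l : ℕ) (h : k ≤ l) :
    (fun r : ℝ => (r ^ l)⁻¹) =O[atTop] fun r => (r ^ k)⁻¹ := by
  apply aux_sum _ _ 1
  intro r hr
  have h0 : (0:ℝ) < r := lt_of_lt_of_le one_pos hr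
  rw [abs_inv, abs_pow, abs_of_pos h0, abs_inv, abs_pow, abs_of_pos h0, one_mul]
  gcongr

private lemma aux_mulg {f₁ f₂ : ℝ → ℝ} (k l : ℕ)
    (h₁ : f₁ =O[atTop] fun r : ℝ => (r ^ k)⁻¹) (h₂ : f₂ =O[atTop] fun r : ℝ => (r ^ l)⁻¹) :
    (fun r => f₁ r * f₂ r) =O[atTop] fun r : ℝ => (r ^ (k + l))⁻¹ := by
  have e : (fun r : ℝ => (r ^ k)⁻¹ * (r ^ l)⁻¹) = fun r : ℝ => (r ^ (k + l))⁻¹ := by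
    funext r; rw [pow_add, mul_inv]
  rw [← e]
  exact h₁.mul h₂

private lemma aux_w (c₁ c₂ c₃ : ℝ) :
    (fun r : ℝ => c₁ / r + c₂ / r ^ 2 + c₃ / r ^ 3) =O[atTop] fun r => (r ^ 1)⁻¹ := by
  apply aux_sum _ _ (|c₁| + |c₂| + |c₃|)
  intro r hr
  have h0 : (0:ℝ) < r := lt_of_lt_of_le one_pos hr
  have e0 : |(r ^ 1)⁻¹| = 1 / r := by
    rw [abs_inv, abs_pow, abs_of_pos h0, pow_one, inv_eq_one_div]
  rw [e0]
  have t1 : |c₁ / r| = |c₁| / r := by rw [abs_div, abs_of_pos h0]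
  have t2 : |c₂ / r ^ 2| ≤ |c₂| / r := by
    rw [abs_div, abs_pow, abs_of_pos h0]; gcongr; nlinarith
  have t3 : |c₃ / r ^ 3| ≤ |c₃| / r := by
    rw [abs_div, abs_pow, abs_of_pos h0]; gcongr; nlinarith
  calc |c₁ / r + c₂ / r ^ 2 + c₃ / r ^ 3|
      ≤ |c₁ / r| + |c₂ / r ^ 2| + |c₃ / r ^ 3| := abs_add_three _ _ _
    _ ≤ |c₁| / r + |c₂| / r + |c₃| / r := by rw [t1]; gcongr
    _ = (|c₁| + |c₂| + |c₃|) * (1 / r) := by ring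

private lemma aux_A (c₂ c₃ c₄ c₅ c₆ : ℝ) :
    (fun r : ℝ => c₂ / r ^ 2 + c₃ / r ^ 3 + c₄ / r ^ 4 + c₅ / r ^ 5 + c₆ / r ^ 6)
      =O[atTop] fun r => (r ^ 2)⁻¹ := by
  apply aux_sum _ _ (|c₂| + |c₃| + |c₄| + |c₅| + |c₆|)
  intro r hr
  have h0 : (0:ℝ) < r := lt_of_lt_of_le one_pos hr
  have e0 : |(r ^ 2)⁻¹| = 1 / r ^ 2 := by
    rw [abs_inv, abs_pow, abs_of_pos h0, inv_eq_one_div]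
  rw [e0]
  have b : ∀ k : ℕ, 2 ≤ k → ∀ c : ℝ, |c / r ^ k| ≤ |c| / r ^ 2 := by
    intro k hk c
    rw [abs_div, abs_pow, abs_of_pos h0]
    gcongr
  calc |c₂ / r ^ 2 + c₃ / r ^ 3 + c₄ / r ^ 4 + c₅ / r ^ 5 + c₆ / r ^ 6|
      ≤ |c₂ / r ^ 2 + c₃ / r ^ 3 + c₄ / r ^ 4 + c₅ / r ^ 5| + |c₆ / r ^ 6| := abs_add_le _ _
    _ ≤ |c₂ / r ^ 2 + c₃ / r ^ 3 + c₄ / r ^ 4| + |c₅ / r ^ 5| + |c₆ / r ^ 6| := by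
        gcongr; exact abs_add_le _ _
    _ ≤ (|c₂ / r ^ 2| + |c₃ / r ^ 3| + |c₄ / r ^ 4|) + |c₅ / r ^ 5| + |c₆ / r ^ 6| := by
        gcongr; exact abs_add_three _ _ _
    _ ≤ (|c₂| / r ^ 2 + |c₃| / r ^ 2 + |c₄| / r ^ 2) + |c₅| / r ^ 2 + |c₆| / r ^ 2 := by
        gcongr <;> [exact b 2 le_rfl c₂; exact b 3 (by norm_num) c₃; exact b 4 (by norm_num) c₄;
          exact b 5 (by norm_num) c₅; exact b 6 (by norm_num) c₆]
    _ = (|c₂| + |c₃| + |c₄| + |c₅| + |c₆|) * (1 / r ^ 2) := by ring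

private lemma aux_T : (fun r : ℝ => r * Real.sqrt (1 + r ^ 2) - (r ^ 2 + 1 / 2))
    =O[atTop] fun r => (r ^ 2)⁻¹ := by
  apply aux_sum _ _ 1
  intro r hr
  have h0 : (0:ℝ) < r := lt_of_lt_of_le one_pos hr
  set t := Real.sqrt (1 + r ^ 2) with htdef
  have ht2 : t ^ 2 = 1 + r ^ 2 := Real.sq_sqrt (by positivity)
  have ht0 : 0 < t := Real.sqrt_pos.mpr (by positivity)
  have htr : r ≤ t := by nlinarith
  have key : (r * t - (r ^ 2 + 1 / 2)) * (r * t + (r ^ 2 + 1 / 2)) = -(1 / 4) := by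
    linear_combination r ^ 2 * ht2
  have hden : r ^ 2 ≤ r * t + (r ^ 2 + 1 / 2) := by nlinarith
  have habs : |r * t - (r ^ 2 + 1 / 2)| * (r * t + (r ^ 2 + 1 / 2)) = 1 / 4 := by
    have hdpos : 0 < r * t + (r ^ 2 + 1 / 2) := by nlinarith
    rw [← abs_of_pos hdpos, ← abs_mul, key]
    norm_num
  have e0 : (1:ℝ) * |(r ^ 2)⁻¹| = 1 / r ^ 2 := by
    rw [abs_inv, abs_pow, abs_of_pos h0, one_mul, inv_eq_one_div]
  rw [e0, le_div_iff₀ (by positivity)]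
  nlinarith [abs_nonneg (r * t - (r ^ 2 + 1 / 2))]

private lemma aux_delta : (fun r : ℝ => r / Real.sqrt (1 + r ^ 2) - 1)
    =O[atTop] fun r => (r ^ 2)⁻¹ := by
  apply aux_sum _ _ 1
  intro r hr
  have h0 : (0:ℝ) < r := lt_of_lt_of_le one_pos hr
  set t := Real.sqrt (1 + r ^ 2) with htdef
  have ht2 : t ^ 2 = 1 + r ^ 2 := Real.sq_sqrt (by positivity)
  have ht0 : 0 < t := Real.sqrt_pos.mpr (by positivity)
  have htr : r ≤ t := by nlinarith
  have key : (r / t - 1) * (t * (r + t)) = -1 := by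
    field_simp
    linear_combination (-1) * ht2
  have habs : |r / t - 1| * (t * (r + t)) = 1 := by
    have hdpos : 0 < t * (r + t) := by nlinarith
    rw [← abs_of_pos hdpos, ← abs_mul, key]
    norm_num
  have hden : r ^ 2 ≤ t * (r + t) := by nlinarith
  have e0 : (1:ℝ) * |(r ^ 2)⁻¹| = 1 / r ^ 2 := by
    rw [abs_inv, abs_pow, abs_of_pos h0, one_mul, inv_eq_one_div]
  rw [e0, le_div_iff₀ (by positivity)]
  nlinarith [abs_nonneg (r / t - 1)]

private lemma aux_M (mR W r t : ℝ) (hr : r ≠ 0) (ht : t ≠ 0) (ht2 : t ^ 2 = 1 + r ^ 2) :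
    (1 + r ^ 2 - mR / r) * (r / t + W) ^ 2
      = (r ^ 2 + 2 * (r ^ 2 + 1 / 2) * W + (1 + r ^ 2) * W ^ 2 - mR / r)
        + 2 * W * (r * t - (r ^ 2 + 1 / 2)) - mR / r * ((r / t + W) ^ 2 - 1) := by
  rw [← ht2]
  field_simp
  ring

private lemma aux_Aid (𝒜 C₁ D₁ D₂ mR r : ℝ) (hr : r ≠ 0) :
    r ^ 2 + 2 * (r ^ 2 + 1 / 2) * (𝒜 / r - D₁ / r ^ 2 - 2 * D₂ / r ^ 3)
      + (1 + r ^ 2) * (𝒜 / r - D₁ / r ^ 2 - 2 * D₂ / r ^ 3) ^ 2 - mR / r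
      + 1 - 2 * C₁ / r
      - (r + 𝒜 + (1 - 2 * D₁) / (2 * r) - (2 * C₁ + 4 * D₂ + mR) / (2 * r ^ 2)) ^ 2
    = (𝒜 ^ 2 + 2 * 𝒜 * C₁ + 𝒜 * mR - 1 / 4) / r ^ 2
      + (-2 * D₂ + 4 * D₁ * D₂ - 2 * 𝒜 * D₁
          + (1 - 2 * D₁) * (2 * C₁ + 4 * D₂ + mR) / 2) / r ^ 3
      + (4 * D₂ ^ 2 + D₁ ^ 2 - 4 * 𝒜 * D₂ - (2 * C₁ + 4 * D₂ + mR) ^ 2 / 4) / r ^ 4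
      + (4 * D₁ * D₂) / r ^ 5 + (4 * D₂ ^ 2) / r ^ 6 := by
  field_simp
  ring

private lemma aux_deriv (𝒜 𝓑 D₁ D₂ : ℝ) (r : ℝ) (hr : 0 < r) :
    HasDerivAt (fun s => Real.sqrt (1 + s ^ 2) + 𝒜 * Real.log s + 𝓑 +
      D₁ / s + D₂ / s ^ 2)
      (r / Real.sqrt (1 + r ^ 2) + 𝒜 / r - D₁ / r ^ 2 - 2 * D₂ / r ^ 3) r := by
  have h0 : (1 : ℝ) + r ^ 2 ≠ 0 := by positivity
  have hs : HasDerivAt (fun s : ℝ => Real.sqrt (1 + s ^ 2)) (r / Real.sqrt (1 + r ^ 2)) r := by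
    have h1 : HasDerivAt (fun s : ℝ => 1 + s ^ 2) (2 * r) r := by
      simpa using (hasDerivAt_pow 2 r).const_add 1
    have := h1.sqrt h0
    convert this using 1
    rw [eq_div_iff (by positivity : (2:ℝ) * Real.sqrt (1 + r ^ 2) ≠ 0)]
    rw [div_mul_eq_mul_div, mul_comm (2:ℝ) (Real.sqrt _), ← mul_assoc]
    rw [mul_comm r (Real.sqrt _), mul_assoc (Real.sqrt _),
      div_eq_iff (by positivity : Real.sqrt (1 + r ^ 2) ≠ 0)]
    ring
  have hlog : HasDerivAt (fun s : ℝ => 𝒜 * Real.log s) (𝒜 * r⁻¹) r :=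
    (Real.hasDerivAt_log hr.ne').const_mul 𝒜
  have hd1 : HasDerivAt (fun s : ℝ => D₁ / s) (D₁ * (-(r ^ 2)⁻¹)) r := by
    simpa [div_eq_mul_inv] using (hasDerivAt_inv hr.ne').const_mul D₁
  have hd2 : HasDerivAt (fun s : ℝ => D₂ / s ^ 2) (D₂ * (-(2 * r ^ 1) / (r ^ 2) ^ 2)) r := by
    simpa [div_eq_mul_inv] using ((hasDerivAt_pow 2 r).inv (pow_ne_zero 2 hr.ne')).const_mul D₂
  have := (((hs.add hlog).add_const 𝓑).add hd1).add hd2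
  refine this.congr_deriv ?_
  field_simp
  ring

private lemma aux_final (Q P : ℝ → ℝ)
    (hQO : (fun r => Q r - P r ^ 2) =O[atTop] fun r : ℝ => (r ^ 2)⁻¹)
    (hP : ∀ᶠ r in atTop, r / 2 ≤ P r) :
    ∃ c R, (1:ℝ) ≤ R ∧ ∀ r ≥ R, |Real.sqrt (Q r) - P r| ≤ c * r ^ (-3 : ℝ) := by
  obtain ⟨c, hc⟩ := isBigO_iff.mp hQO
  obtain ⟨R₁, hR₁⟩ := eventually_atTop.mp (hc.and hP)
  refine ⟨2 * c, max R₁ (max c 4), le_trans (by norm_num)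
    (le_trans (le_max_right _ _) (le_max_right _ _)), ?_⟩
  intro r hr
  have hrR₁ : R₁ ≤ r := le_trans (le_max_left _ _) hr
  have hrc : c ≤ r := le_trans (le_trans (le_max_left _ _) (le_max_right _ _)) hr
  have hr4 : (4:ℝ) ≤ r := le_trans (le_trans (le_max_right _ _) (le_max_right _ _)) hr
  have h1r : (1:ℝ) ≤ r := by linarith
  have h0 : (0:ℝ) < r := by linarith
  obtain ⟨hDb, hPlow⟩ := hR₁ r hrR₁
  have hDb' : |Q r - P r ^ 2| ≤ c / r ^ 2 := by
    have e : ‖(r ^ 2)⁻¹‖ = (r ^ 2)⁻¹ := by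
      rw [Real.norm_eq_abs, abs_inv, abs_pow, abs_of_pos h0]
    rw [Real.norm_eq_abs, e] at hDb
    rw [div_eq_mul_inv]
    exact hDb
  have hc0 : 0 ≤ c := by
    by_contra hneg
    push_neg at hneg
    have : c / r ^ 2 < 0 := div_neg_of_neg_of_pos hneg (by positivity)
    nlinarith [abs_nonneg (Q r - P r ^ 2)]
  have hlb : -(c / r ^ 2) ≤ Q r - P r ^ 2 := neg_le_of_abs_le hDb'
  have hQpos : 0 ≤ Q r := by
    have hcr : c / r ^ 2 ≤ r ^ 2 / 4 := by
      rw [div_le_div_iff₀ (by positivity) (by norm_num)]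
      have s1 : 4 * c ≤ 4 * r := by linarith
      have s2 : 4 * r ≤ r ^ 2 := by nlinarith
      have s3 : r ^ 2 ≤ r ^ 2 * r ^ 2 := by nlinarith
      linarith
    nlinarith
  have hsq : Real.sqrt (Q r) ^ 2 = Q r := Real.sq_sqrt hQpos
  have hsge : 0 ≤ Real.sqrt (Q r) := Real.sqrt_nonneg _
  have hden : r / 2 ≤ Real.sqrt (Q r) + P r := by linarith
  have hdpos : 0 < Real.sqrt (Q r) + P r := by linarith
  have key : (Real.sqrt (Q r) - P r) * (Real.sqrt (Q r) + P r) = Q r - P r ^ 2 := by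
    linear_combination hsq
  have habs : |Real.sqrt (Q r) - P r| * (Real.sqrt (Q r) + P r) = |Q r - P r ^ 2| := by
    rw [← abs_of_pos hdpos, ← abs_mul, key]
  have hrpow : r ^ (-3:ℝ) = (r ^ 3)⁻¹ := by
    rw [show (-3:ℝ) = -((3:ℕ):ℝ) by norm_num, Real.rpow_neg h0.le, Real.rpow_natCast]
  rw [hrpow]
  have s2 : |Real.sqrt (Q r) - P r| * (r / 2) ≤ c / r ^ 2 := by
    have := mul_le_mul_of_nonneg_left hden (abs_nonneg (Real.sqrt (Q r) - P r))
    linarith [habs ▸ this, hDb']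
  have goal2 : |Real.sqrt (Q r) - P r| * r ^ 3 ≤ 2 * c := by
    have s3 : |Real.sqrt (Q r) - P r| * r ^ 3
        = (|Real.sqrt (Q r) - P r| * (r / 2)) * (2 * r ^ 2) := by ring
    have s4 : (|Real.sqrt (Q r) - P r| * (r / 2)) * (2 * r ^ 2) ≤ (c / r ^ 2) * (2 * r ^ 2) :=
      mul_le_mul_of_nonneg_right s2 (by positivity)
    have s5 : (c / r ^ 2) * (2 * r ^ 2) = 2 * c := by field_simp
    linarith [s3 ▸ s4, s5 ▸ s4]
  rw [show 2 * c * (r ^ 3)⁻¹ = 2 * c / r ^ 3 from (div_eq_mul_inv _ _).symm,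
    le_div_iff₀ (by positivity : (0:ℝ) < r ^ 3)]
  linarith [goal2]

/-- Expansion (0018-3): √(g^{rr} f₀′² + H) = r + 𝒜 + (1 − 2D₁)/(2r)
− (2C₁ + 4D₂ + mR)/(2r²) + O(r^{−3}) for the approximate solution
f₀ = √(1+r²) + 𝒜 log r + 𝓑 + D₁/r + D₂/r². -/
theorem stmt_9 (𝒜 𝓑 C₁ D₁ D₂ mR r₀ : ℝ) (hr₀ : 0 < r₀)
    (G H : ℝ → ℝ)
    (hG : ∃ C R, ∀ r ≥ R, |G r - ((1 + r ^ 2) - mR / r)| ≤ C * r ^ (-2 : ℝ))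
    (hH : ∃ C R, ∀ r ≥ R, |H r - (1 - 2 * C₁ / r)| ≤ C * r ^ (-2 : ℝ)) :
    ∃ C R, ∀ r ≥ R,
      |Real.sqrt (G r *
          (deriv (fun s => Real.sqrt (1 + s ^ 2) + 𝒜 * Real.log s + 𝓑 +
            D₁ / s + D₂ / s ^ 2) r) ^ 2 + H r) -
        (r + 𝒜 + (1 - 2 * D₁) / (2 * r) -
          (2 * C₁ + 4 * D₂ + mR) / (2 * r ^ 2))| ≤ C * r ^ (-3 : ℝ) := by
  have hsq2 : ∀ r : ℝ, Real.sqrt (1 + r ^ 2) ^ 2 = 1 + r ^ 2 :=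
    fun r => Real.sq_sqrt (by positivity)
  have hsq0 : ∀ r : ℝ, 0 < Real.sqrt (1 + r ^ 2) :=
    fun r => Real.sqrt_pos.mpr (by positivity)
  -- the functions
  let φ : ℝ → ℝ := fun r => r / Real.sqrt (1 + r ^ 2) + 𝒜 / r - D₁ / r ^ 2 - 2 * D₂ / r ^ 3
  let w : ℝ → ℝ := fun r => 𝒜 / r - D₁ / r ^ 2 - 2 * D₂ / r ^ 3
  let P : ℝ → ℝ := fun r => r + 𝒜 + (1 - 2 * D₁) / (2 * r) -
    (2 * C₁ + 4 * D₂ + mR) / (2 * r ^ 2)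
  let Q : ℝ → ℝ := fun r => G r * φ r ^ 2 + H r
  -- small big-O facts
  have hwO : w =O[atTop] fun r => (r ^ 1)⁻¹ :=
    (aux_w 𝒜 (-D₁) (-2 * D₂)).congr_left (fun r => by show _ = w r; simp only [φ, w]; ring)
  have hφm1 : (fun r => φ r - 1) =O[atTop] fun r => (r ^ 1)⁻¹ := by
    have h := (aux_delta.trans (aux_pow 1 2 one_le_two)).add hwO
    exact h.congr_left (fun r => by simp only [φ, w]; ring)
  have hone : (fun _ : ℝ => (1:ℝ)) =O[atTop] fun r : ℝ => (r ^ 0)⁻¹ := by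
    apply aux_sum _ _ 1
    intro r hr
    simp
  have htwo : (fun _ : ℝ => (2:ℝ)) =O[atTop] fun r : ℝ => (r ^ 0)⁻¹ := by
    apply aux_sum _ _ 2
    intro r hr
    simp
  have hφ0 : φ =O[atTop] fun r : ℝ => (r ^ 0)⁻¹ := by
    have h := (hφm1.trans (aux_pow 0 1 (Nat.zero_le 1))).add hone
    exact h.congr_left (fun r => by ring)
  have hφp1 : (fun r => φ r + 1) =O[atTop] fun r : ℝ => (r ^ 0)⁻¹ := by
    have h := (hφm1.trans (aux_pow 0 1 (Nat.zero_le 1))).add htwo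
    exact h.congr_left (fun r => by ring)
  have hφsq : (fun r => φ r ^ 2) =O[atTop] fun r : ℝ => (r ^ 0)⁻¹ := by
    have h := aux_mulg 0 0 hφ0 hφ0
    exact h.congr_left (fun r => by ring)
  have hφsq1 : (fun r => φ r ^ 2 - 1) =O[atTop] fun r : ℝ => (r ^ 1)⁻¹ := by
    have h := aux_mulg 1 0 hφm1 hφp1
    exact h.congr_left (fun r => by ring)
  have hmr : (fun r : ℝ => mR / r) =O[atTop] fun r : ℝ => (r ^ 1)⁻¹ :=
    (aux_w mR 0 0).congr_left (fun r => by ring)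
  -- hypotheses as big-O
  have hGO : (fun r => G r - ((1 + r ^ 2) - mR / r)) =O[atTop] fun r : ℝ => (r ^ 2)⁻¹ := by
    obtain ⟨c, R, hb⟩ := hG
    apply IsBigO.of_bound c
    filter_upwards [eventually_ge_atTop R, eventually_ge_atTop (1:ℝ)] with r h1 h2
    have h0 : (0:ℝ) < r := lt_of_lt_of_le one_pos h2
    have e : r ^ (-2:ℝ) = (r ^ 2)⁻¹ := by
      rw [show (-2:ℝ) = -((2:ℕ):ℝ) by norm_num, Real.rpow_neg h0.le, Real.rpow_natCast]
    have := hb r h1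
    rw [e] at this
    rw [Real.norm_eq_abs, Real.norm_eq_abs, abs_inv, abs_pow, abs_of_pos h0]
    exact this
  have hHO : (fun r => H r - (1 - 2 * C₁ / r)) =O[atTop] fun r : ℝ => (r ^ 2)⁻¹ := by
    obtain ⟨c, R, hb⟩ := hH
    apply IsBigO.of_bound c
    filter_upwards [eventually_ge_atTop R, eventually_ge_atTop (1:ℝ)] with r h1 h2
    have h0 : (0:ℝ) < r := lt_of_lt_of_le one_pos h2
    have e : r ^ (-2:ℝ) = (r ^ 2)⁻¹ := by
      rw [show (-2:ℝ) = -((2:ℕ):ℝ) by norm_num, Real.rpow_neg h0.le, Real.rpow_natCast]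
    have := hb r h1
    rw [e] at this
    rw [Real.norm_eq_abs, Real.norm_eq_abs, abs_inv, abs_pow, abs_of_pos h0]
    exact this
  -- the main expansion bound
  have hMO : (fun r => ((1 + r ^ 2) - mR / r) * φ r ^ 2 + (1 - 2 * C₁ / r) - P r ^ 2)
      =O[atTop] fun r : ℝ => (r ^ 2)⁻¹ := by
    have hA : (fun r => r ^ 2 + 2 * (r ^ 2 + 1 / 2) * w r + (1 + r ^ 2) * w r ^ 2 - mR / r
        + 1 - 2 * C₁ / r - P r ^ 2) =O[atTop] fun r : ℝ => (r ^ 2)⁻¹ := by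
      have heq : (fun r => r ^ 2 + 2 * (r ^ 2 + 1 / 2) * w r + (1 + r ^ 2) * w r ^ 2 - mR / r
          + 1 - 2 * C₁ / r - P r ^ 2) =ᶠ[atTop]
          (fun r => (𝒜 ^ 2 + 2 * 𝒜 * C₁ + 𝒜 * mR - 1 / 4) / r ^ 2
            + (-2 * D₂ + 4 * D₁ * D₂ - 2 * 𝒜 * D₁
                + (1 - 2 * D₁) * (2 * C₁ + 4 * D₂ + mR) / 2) / r ^ 3
            + (4 * D₂ ^ 2 + D₁ ^ 2 - 4 * 𝒜 * D₂ - (2 * C₁ + 4 * D₂ + mR) ^ 2 / 4) / r ^ 4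
            + (4 * D₁ * D₂) / r ^ 5 + (4 * D₂ ^ 2) / r ^ 6) := by
        filter_upwards [eventually_ge_atTop (1:ℝ)] with r hr
        have h0 : (0:ℝ) < r := lt_of_lt_of_le one_pos hr
        exact aux_Aid 𝒜 C₁ D₁ D₂ mR r h0.ne'
      exact heq.trans_isBigO (aux_A _ _ _ _ _)
    have h2w : (fun r => 2 * w r * (r * Real.sqrt (1 + r ^ 2) - (r ^ 2 + 1 / 2)))
        =O[atTop] fun r : ℝ => (r ^ 2)⁻¹ := by
      have h := (aux_mulg 1 2 hwO aux_T).trans (aux_pow 2 3 (by norm_num))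
      exact (h.const_mul_left 2).congr_left (fun r => by ring)
    have h3 : (fun r => mR / r * (φ r ^ 2 - 1)) =O[atTop] fun r : ℝ => (r ^ 2)⁻¹ :=
      aux_mulg 1 1 hmr hφsq1
    have heqM : (fun r => ((1 + r ^ 2) - mR / r) * φ r ^ 2 + (1 - 2 * C₁ / r) - P r ^ 2)
        =ᶠ[atTop] (fun r => (r ^ 2 + 2 * (r ^ 2 + 1 / 2) * w r + (1 + r ^ 2) * w r ^ 2 - mR / r
          + 1 - 2 * C₁ / r - P r ^ 2)
          + 2 * w r * (r * Real.sqrt (1 + r ^ 2) - (r ^ 2 + 1 / 2))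
          - mR / r * (φ r ^ 2 - 1)) := by
      filter_upwards [eventually_ge_atTop (1:ℝ)] with r hr
      have h0 : (0:ℝ) < r := lt_of_lt_of_le one_pos hr
      have hM := aux_M mR (w r) r (Real.sqrt (1 + r ^ 2)) h0.ne' (hsq0 r).ne' (hsq2 r)
      have hφw : φ r = r / Real.sqrt (1 + r ^ 2) + w r := by simp only [φ, w]; ring
      rw [hφw]
      linear_combination hM
    exact heqM.trans_isBigO ((hA.add h2w).sub h3)
  have hQO : (fun r => Q r - P r ^ 2) =O[atTop] fun r : ℝ => (r ^ 2)⁻¹ := by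
    have heq : (fun r => Q r - P r ^ 2) = fun r =>
        (G r - ((1 + r ^ 2) - mR / r)) * φ r ^ 2 + (H r - (1 - 2 * C₁ / r))
          + (((1 + r ^ 2) - mR / r) * φ r ^ 2 + (1 - 2 * C₁ / r) - P r ^ 2) := by
      funext r; simp only [Q]; ring
    rw [heq]
    have h1 := (aux_mulg 2 0 hGO hφsq).congr_right
      (fun r => by rw [show (2 + 0) = 2 from rfl])
    exact ((aux_mulg 2 0 hGO hφsq).add hHO).add hMO
  -- eventual lower bound on P
  have hP : ∀ᶠ r in atTop, r / 2 ≤ P r := by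
    have hK : ∀ r ≥ (1:ℝ), r - (|𝒜| + |1 - 2 * D₁| / 2 + |2 * C₁ + 4 * D₂ + mR| / 2) ≤ P r := by
      intro r hr
      have h0 : (0:ℝ) < r := lt_of_lt_of_le one_pos hr
      have b1 : |(1 - 2 * D₁) / (2 * r)| ≤ |1 - 2 * D₁| / 2 := by
        rw [abs_div, abs_of_pos (by positivity : (0:ℝ) < 2 * r)]
        gcongr
        linarith
      have b2 : |(2 * C₁ + 4 * D₂ + mR) / (2 * r ^ 2)| ≤ |2 * C₁ + 4 * D₂ + mR| / 2 := by
        rw [abs_div, abs_of_pos (by positivity : (0:ℝ) < 2 * r ^ 2)]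
        gcongr
        nlinarith
      have e1 := neg_abs_le 𝒜
      have e2 := neg_le_of_abs_le b1
      have e3 := le_of_abs_le b2
      simp only [P]
      linarith
    filter_upwards [eventually_ge_atTop
        (max 1 (2 * (|𝒜| + |1 - 2 * D₁| / 2 + |2 * C₁ + 4 * D₂ + mR| / 2)))] with r hr
    have h1 : (1:ℝ) ≤ r := le_trans (le_max_left _ _) hr
    have h2 : 2 * (|𝒜| + |1 - 2 * D₁| / 2 + |2 * C₁ + 4 * D₂ + mR| / 2) ≤ r :=
      le_trans (le_max_right _ _) hr
    have := hK r h1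
    linarith
  obtain ⟨c, R, hR1, hfin⟩ := aux_final Q P hQO hP
  refine ⟨c, max R 1, ?_⟩
  intro r hr
  have hrR : R ≤ r := le_trans (le_max_left _ _) hr
  have h1r : (1:ℝ) ≤ r := le_trans (le_max_right _ _) hr
  have h0 : (0:ℝ) < r := lt_of_lt_of_le one_pos h1r
  have hd : deriv (fun s => Real.sqrt (1 + s ^ 2) + 𝒜 * Real.log s + 𝓑 +
      D₁ / s + D₂ / s ^ 2) r = φ r := (aux_deriv 𝒜 𝓑 D₁ D₂ r h0).deriv
  rw [hd]
  exact hfin r hrR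
end

section
/- Let 𝒜, 𝓑, C₁, C₂, C₃, D₁, D₂, 𝐦 ∈ ℝ and r₀ > 0. Define f₀(r) = √(1 + r²) + 𝒜 log r + 𝓑 + D₁/r + D₂/r² for r ≥ r₀. Suppose u : [r₀, ∞) → (0, ∞) is differentiable with u(r) = 1 + C₁/r + C₂/r² + C₃/r³ + O(r^{−4}) and u′(r) = −C₁/r² − 2C₂/r³ − 3C₃/r⁴ + O(r^{−5}) as r → ∞, and suppose G : [r₀, ∞) → ℝ satisfies G(r) = (1 + r²) − 𝐦/r + O(r^{−2}) as r → ∞. Then 2 G(r) u′(r) f₀′(r) / u(r) = −2C₁ + (2C₁² − 4C₂ − 2𝒜C₁)/r + (2C₁D₁ − C₁ + 6C₁C₂ − 6C₃ − 4𝒜C₂ + 2𝒜C₁² − 2C₁³)/r² + O(r^{−3}) as r → ∞. -/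
/-- Derivative of the approximate solution `f₀`. -/
lemma f0_deriv (𝒜 𝓑 D₁ D₂ : ℝ) {r : ℝ} (hr : 0 < r) :
    deriv (fun s => Real.sqrt (1 + s ^ 2) + 𝒜 * Real.log s + 𝓑 +
      D₁ / s + D₂ / s ^ 2) r
      = r / Real.sqrt (1 + r ^ 2) + 𝒜 / r - D₁ / r ^ 2 - 2 * D₂ / r ^ 3 := by
  have hsp : (0:ℝ) < 1 + r ^ 2 := by positivity
  have hsqp : 0 < Real.sqrt (1 + r ^ 2) := Real.sqrt_pos.2 hsp
  have h1 : HasDerivAt (fun s : ℝ => 1 + s ^ 2) (2 * r) r := by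
    simpa using (hasDerivAt_pow 2 r).const_add 1
  have hsq : HasDerivAt (fun s : ℝ => Real.sqrt (1 + s ^ 2))
      (1 / (2 * Real.sqrt (1 + r ^ 2)) * (2 * r)) r :=
    (Real.hasDerivAt_sqrt hsp.ne').comp r h1
  have hlog : HasDerivAt (fun s : ℝ => 𝒜 * Real.log s) (𝒜 * r⁻¹) r :=
    (Real.hasDerivAt_log hr.ne').const_mul 𝒜
  have hd1 : HasDerivAt (fun s : ℝ => D₁ / s) (D₁ * (-(r ^ 2)⁻¹)) r := by
    simpa [div_eq_mul_inv] using (hasDerivAt_inv hr.ne').const_mul D₁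
  have hd2 : HasDerivAt (fun s : ℝ => D₂ / s ^ 2)
      (D₂ * (-(2 * r ^ 1) / (r ^ 2) ^ 2)) r := by
    simpa [div_eq_mul_inv] using
      ((hasDerivAt_pow 2 r).inv (pow_ne_zero 2 hr.ne')).const_mul D₂
  have := ((((hsq.add hlog).add_const 𝓑).add hd1).add hd2)
  rw [show deriv (fun s : ℝ => Real.sqrt (1 + s ^ 2) + 𝒜 * Real.log s + 𝓑 +
      D₁ / s + D₂ / s ^ 2) r = _ from this.deriv]
  field_simp
  ring

/-- Taylor-type bound for `r/√(1+r²)`. -/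
lemma sqrt_err {r : ℝ} (hr : 1 ≤ r) :
    |r / Real.sqrt (1 + r ^ 2) - (1 - 1 / (2 * r ^ 2))| ≤ 1 / r ^ 4 := by
  have hr0 : (0:ℝ) < r := lt_of_lt_of_le one_pos hr
  set s := Real.sqrt (1 + r ^ 2) with hs
  have hsp : (0:ℝ) < 1 + r ^ 2 := by positivity
  have hs0 : 0 < s := Real.sqrt_pos.2 hsp
  have hs2 : s ^ 2 = 1 + r ^ 2 := Real.sq_sqrt hsp.le
  have hrs : r < s := by nlinarith [hs2, hs0]
  have key : r / s - (1 - 1 / (2 * r ^ 2))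
      = (r * s + 1 - r ^ 2) / (2 * r ^ 2 * s * (r + s)) := by
    have h1 : s ≠ 0 := hs0.ne'
    have h2 : r ≠ 0 := hr0.ne'
    have h3 : r + s ≠ 0 := by positivity
    field_simp
    linear_combination (1 - 2*r^2) * hs2
  have hN1 : 0 < r * s + 1 - r ^ 2 := by nlinarith
  have hN2 : r * s + 1 - r ^ 2 ≤ 3 / 2 := by nlinarith [sq_nonneg (s - r)]
  rw [key, abs_of_pos (by positivity)]
  rw [div_le_div_iff₀ (by positivity) (by positivity)]
  have h4 : 2 * r ^ 2 ≤ s * (r + s) := by nlinarith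
  have h5 : 4 * r ^ 4 ≤ 2 * r ^ 2 * s * (r + s) := by nlinarith [sq_nonneg r]
  nlinarith [h5, mul_le_mul_of_nonneg_right hN2 (by positivity : (0:ℝ) ≤ r ^ 4),
    pow_pos hr0 4]

/-- The main rational-function cancellation identity. -/
lemma main_id (𝒜 C₁ C₂ C₃ D₁ D₂ mR : ℝ) {r : ℝ} (hr : r ≠ 0) :
    2 * ((1 + r ^ 2) - mR / r) * (-C₁ / r ^ 2 - 2 * C₂ / r ^ 3 - 3 * C₃ / r ^ 4) *
        (1 + 𝒜 / r - 1 / (2 * r ^ 2) - D₁ / r ^ 2 - 2 * D₂ / r ^ 3) -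
      (1 + C₁ / r + C₂ / r ^ 2 + C₃ / r ^ 3) *
        (-2 * C₁ + (2 * C₁ ^ 2 - 4 * C₂ - 2 * 𝒜 * C₁) / r +
          (2 * C₁ * D₁ - C₁ + 6 * C₁ * C₂ - 6 * C₃ - 4 * 𝒜 * C₂ +
            2 * 𝒜 * C₁ ^ 2 - 2 * C₁ ^ 3) / r ^ 2)
    = (((-2)*C₂ + 4*C₂*D₁ + 4*C₂^2 + 2*C₁*mR + 4*C₁*D₂ + 8*C₁*C₃ + C₁^2 + (-2)*C₁^2*D₁ + (-8)*C₁^2*C₂ + 2*C₁^4 + (-6)*𝒜*C₃ + (-2)*𝒜*C₁ + 6*𝒜*C₁*C₂ + (-2)*𝒜*C₁^3)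
      + ((-3)*C₃ + 6*C₃*D₁ + 4*C₂*mR + 8*C₂*D₂ + 10*C₂*C₃ + C₁ + 2*C₁*D₁ + C₁*C₂ + (-2)*C₁*C₂*D₁ + (-6)*C₁*C₂^2 + (-2)*C₁^2*C₃ + 2*C₁^3*C₂ + (-4)*𝒜*C₂ + 4*𝒜*C₂^2 + 2*𝒜*C₁*mR + 2*𝒜*C₁*C₃ + (-2)*𝒜*C₁^2*C₂) / r
      + (6*C₃*mR + 12*C₃*D₂ + 6*C₃^2 + 2*C₂ + 4*C₂*D₁ + (-1)*C₁*mR + 4*C₁*D₂ + (-2)*C₁*D₁*mR + C₁*C₃ + (-2)*C₁*C₃*D₁ + (-6)*C₁*C₂*C₃ + 2*C₁^3*C₃ + (-6)*𝒜*C₃ + 4*𝒜*C₂*mR + 4*𝒜*C₂*C₃ + (-2)*𝒜*C₁^2*C₃) / r ^ 2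
      + (3*C₃ + 6*C₃*D₁ + (-2)*C₂*mR + 8*C₂*D₂ + (-4)*C₂*D₁*mR + (-4)*C₁*D₂*mR + 6*𝒜*C₃*mR) / r ^ 3
      + ((-3)*C₃*mR + 12*C₃*D₂ + (-6)*C₃*D₁*mR + (-8)*C₂*D₂*mR) / r ^ 4
      + ((-12)*C₃*D₂*mR) / r ^ 5) / r ^ 3 := by
  field_simp
  ring

/-- Crude bound for a cubic "polynomial in 1/r". -/
lemma poly_bound3 (a b c d : ℝ) {r : ℝ} (hr : 1 ≤ r) :
    |a + b / r + c / r ^ 2 + d / r ^ 3| ≤ |a| + |b| + |c| + |d| := by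
  have hr0 : (0:ℝ) < r := lt_of_lt_of_le one_pos hr
  have key : ∀ (x : ℝ) (n : ℕ), |x / r ^ n| ≤ |x| := by
    intro x n
    rw [abs_div, abs_pow, abs_of_pos hr0]
    exact div_le_self (abs_nonneg x) (one_le_pow₀ hr)
  have h1 : |b / r| ≤ |b| := by simpa using key b 1
  have h2 : |c / r ^ 2| ≤ |c| := key c 2
  have h3 : |d / r ^ 3| ≤ |d| := key d 3
  calc |a + b / r + c / r ^ 2 + d / r ^ 3|
      ≤ |a + b / r + c / r ^ 2| + |d / r ^ 3| := abs_add_le _ _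
    _ ≤ (|a + b / r| + |c / r ^ 2|) + |d / r ^ 3| := by gcongr; exact abs_add_le _ _
    _ ≤ ((|a| + |b / r|) + |c / r ^ 2|) + |d / r ^ 3| := by gcongr; exact abs_add_le _ _
    _ ≤ |a| + |b| + |c| + |d| := by linarith

/-- Crude bound for a quintic "polynomial in 1/r". -/
lemma poly_bound5 (a b c d e f : ℝ) {r : ℝ} (hr : 1 ≤ r) :
    |a + b / r + c / r ^ 2 + d / r ^ 3 + e / r ^ 4 + f / r ^ 5|
      ≤ |a| + |b| + |c| + |d| + |e| + |f| := by
  have hr0 : (0:ℝ) < r := lt_of_lt_of_le one_pos hr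
  have key : ∀ (x : ℝ) (n : ℕ), |x / r ^ n| ≤ |x| := by
    intro x n
    rw [abs_div, abs_pow, abs_of_pos hr0]
    exact div_le_self (abs_nonneg x) (one_le_pow₀ hr)
  have h4 : |e / r ^ 4| ≤ |e| := key e 4
  have h5 : |f / r ^ 5| ≤ |f| := key f 5
  calc |a + b / r + c / r ^ 2 + d / r ^ 3 + e / r ^ 4 + f / r ^ 5|
      ≤ |a + b / r + c / r ^ 2 + d / r ^ 3| + |e / r ^ 4| + |f / r ^ 5| := by
        calc _ ≤ |a + b / r + c / r ^ 2 + d / r ^ 3 + e / r ^ 4| + |f / r ^ 5| :=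
              abs_add_le _ _
          _ ≤ _ := by gcongr; exact abs_add_le _ _
    _ ≤ (|a| + |b| + |c| + |d|) + |e| + |f| :=
        add_le_add (add_le_add (poly_bound3 a b c d hr) h4) h5
    _ = |a| + |b| + |c| + |d| + |e| + |f| := by ring

lemma rpow_negnat {r : ℝ} (hr : 0 < r) (n : ℕ) : r ^ (-(n : ℝ)) = 1 / r ^ n := by
  rw [Real.rpow_neg hr.le, Real.rpow_natCast, one_div]

set_option maxHeartbeats 4000000 in
/-- Expansion (018-2): the radial part of 2⟨∇u/u, ∇f₀⟩_g equals
−2C₁ + (2C₁² − 4C₂ − 2𝒜C₁)/r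
+ (2C₁D₁ − C₁ + 6C₁C₂ − 6C₃ − 4𝒜C₂ + 2𝒜C₁² − 2C₁³)/r² + O(r^{−3}),
for f₀ = √(1+r²) + 𝒜 log r + 𝓑 + D₁/r + D₂/r². -/
theorem stmt_10 (𝒜 𝓑 C₁ C₂ C₃ D₁ D₂ mR r₀ : ℝ) (hr₀ : 0 < r₀)
    (u u' G : ℝ → ℝ) (hupos : ∀ r ≥ r₀, 0 < u r)
    (hud : ∀ r ≥ r₀, HasDerivAt u (u' r) r)
    (hu : ∃ C R, ∀ r ≥ R,
      |u r - (1 + C₁ / r + C₂ / r ^ 2 + C₃ / r ^ 3)| ≤ C * r ^ (-4 : ℝ))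
    (hu' : ∃ C R, ∀ r ≥ R,
      |u' r - (-C₁ / r ^ 2 - 2 * C₂ / r ^ 3 - 3 * C₃ / r ^ 4)| ≤ C * r ^ (-5 : ℝ))
    (hG : ∃ C R, ∀ r ≥ R, |G r - ((1 + r ^ 2) - mR / r)| ≤ C * r ^ (-2 : ℝ)) :
    ∃ C R, ∀ r ≥ R,
      |2 * G r * u' r *
          (deriv (fun s => Real.sqrt (1 + s ^ 2) + 𝒜 * Real.log s + 𝓑 +
            D₁ / s + D₂ / s ^ 2) r) / u r -
        (-2 * C₁ + (2 * C₁ ^ 2 - 4 * C₂ - 2 * 𝒜 * C₁) / r +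
          (2 * C₁ * D₁ - C₁ + 6 * C₁ * C₂ - 6 * C₃ - 4 * 𝒜 * C₂ +
            2 * 𝒜 * C₁ ^ 2 - 2 * C₁ ^ 3) / r ^ 2)| ≤ C * r ^ (-3 : ℝ) := by
  obtain ⟨Cu, Ru, hCu⟩ := hu
  obtain ⟨Cp, Rp, hCp⟩ := hu'
  obtain ⟨Cg, Rg, hCg⟩ := hG
  -- constants
  set KQ : ℝ := 1 + |𝒜| + (1/2 + |D₁|) + 2 * |D₂| with hKQ
  set KF : ℝ := KQ + 1 with hKF
  set KP : ℝ := |C₁| + 2 * |C₂| + 3 * |C₃| with hKP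
  set KG : ℝ := 2 + |mR| with hKGdef
  set KT : ℝ := 2 * |C₁| + |2 * C₁ ^ 2 - 4 * C₂ - 2 * 𝒜 * C₁| +
      |2 * C₁ * D₁ - C₁ + 6 * C₁ * C₂ - 6 * C₃ - 4 * 𝒜 * C₂ +
        2 * 𝒜 * C₁ ^ 2 - 2 * C₁ ^ 3| with hKT
  set KM : ℝ :=
      |(-2)*C₂ + 4*C₂*D₁ + 4*C₂^2 + 2*C₁*mR + 4*C₁*D₂ + 8*C₁*C₃ + C₁^2 + (-2)*C₁^2*D₁ + (-8)*C₁^2*C₂ + 2*C₁^4 + (-6)*𝒜*C₃ + (-2)*𝒜*C₁ + 6*𝒜*C₁*C₂ + (-2)*𝒜*C₁^3|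
    + |(-3)*C₃ + 6*C₃*D₁ + 4*C₂*mR + 8*C₂*D₂ + 10*C₂*C₃ + C₁ + 2*C₁*D₁ + C₁*C₂ + (-2)*C₁*C₂*D₁ + (-6)*C₁*C₂^2 + (-2)*C₁^2*C₃ + 2*C₁^3*C₂ + (-4)*𝒜*C₂ + 4*𝒜*C₂^2 + 2*𝒜*C₁*mR + 2*𝒜*C₁*C₃ + (-2)*𝒜*C₁^2*C₂|
    + |6*C₃*mR + 12*C₃*D₂ + 6*C₃^2 + 2*C₂ + 4*C₂*D₁ + (-1)*C₁*mR + 4*C₁*D₂ + (-2)*C₁*D₁*mR + C₁*C₃ + (-2)*C₁*C₃*D₁ + (-6)*C₁*C₂*C₃ + 2*C₁^3*C₃ + (-6)*𝒜*C₃ + 4*𝒜*C₂*mR + 4*𝒜*C₂*C₃ + (-2)*𝒜*C₁^2*C₃|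
    + |3*C₃ + 6*C₃*D₁ + (-2)*C₂*mR + 8*C₂*D₂ + (-4)*C₂*D₁*mR + (-4)*C₁*D₂*mR + 6*𝒜*C₃*mR|
    + |(-3)*C₃*mR + 12*C₃*D₂ + (-6)*C₃*D₁*mR + (-8)*C₂*D₂*mR|
    + |(-12)*C₃*D₂*mR| with hKM
  set KΔ : ℝ := KM + 2 * |Cg| * (KP + |Cp|) * KF + 2 * KG * |Cp| * KF +
      2 * KG * KP + |Cu| * KT with hKΔ
  refine ⟨2 * KΔ, max (max (max 1 r₀) (max Ru Rp))
      (max Rg (4 * (|C₁| + |C₂| + |C₃| + |Cu|) + 1)), fun r hr => ?_⟩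
  simp only [ge_iff_le, max_le_iff] at hr
  obtain ⟨⟨⟨hr1, hrr0⟩, hru, hrp⟩, hrg, hrS⟩ := hr
  have hr0 : (0:ℝ) < r := lt_of_lt_of_le one_pos hr1
  have hr0' : r ≠ 0 := hr0.ne'
  have hpow : ∀ m n : ℕ, m ≤ n → r ^ m ≤ r ^ n := fun m n h =>
    pow_le_pow_right₀ hr1 h
  have hKQ0 : 0 ≤ KQ := by positivity
  have hKF0 : 0 ≤ KF := by positivity
  have hKP0 : 0 ≤ KP := by positivity
  have hKG0 : 0 ≤ KG := by positivity
  have hKT0 : 0 ≤ KT := by positivity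
  -- notation for the pieces
  set PG : ℝ := (1 + r ^ 2) - mR / r with hPG
  set Pu : ℝ := 1 + C₁ / r + C₂ / r ^ 2 + C₃ / r ^ 3 with hPu
  set Pu' : ℝ := -C₁ / r ^ 2 - 2 * C₂ / r ^ 3 - 3 * C₃ / r ^ 4 with hPu'
  set Q : ℝ := 1 + 𝒜 / r - 1 / (2 * r ^ 2) - D₁ / r ^ 2 - 2 * D₂ / r ^ 3 with hQ
  set F : ℝ := r / Real.sqrt (1 + r ^ 2) + 𝒜 / r - D₁ / r ^ 2 - 2 * D₂ / r ^ 3 with hF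
  set T : ℝ := -2 * C₁ + (2 * C₁ ^ 2 - 4 * C₂ - 2 * 𝒜 * C₁) / r +
      (2 * C₁ * D₁ - C₁ + 6 * C₁ * C₂ - 6 * C₃ - 4 * 𝒜 * C₂ +
        2 * 𝒜 * C₁ ^ 2 - 2 * C₁ ^ 3) / r ^ 2 with hT
  -- hypothesis bounds in convenient form
  have heu : |u r - Pu| ≤ |Cu| / r ^ 4 := by
    refine le_trans (hCu r hru) ?_
    rw [show (-4:ℝ) = -((4:ℕ):ℝ) by norm_num, rpow_negnat hr0, mul_one_div]
    gcongr
    exact le_abs_self Cu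
  have heu' : |u' r - Pu'| ≤ |Cp| / r ^ 5 := by
    refine le_trans (hCp r hrp) ?_
    rw [show (-5:ℝ) = -((5:ℕ):ℝ) by norm_num, rpow_negnat hr0, mul_one_div]
    gcongr
    exact le_abs_self Cp
  have heG : |G r - PG| ≤ |Cg| / r ^ 2 := by
    refine le_trans (hCg r hrg) ?_
    rw [show (-2:ℝ) = -((2:ℕ):ℝ) by norm_num, rpow_negnat hr0, mul_one_div]
    gcongr
    exact le_abs_self Cg
  have hef : |F - Q| ≤ 1 / r ^ 4 := by
    have : F - Q = r / Real.sqrt (1 + r ^ 2) - (1 - 1 / (2 * r ^ 2)) := by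
      rw [hF, hQ]; ring
    rw [this]
    exact sqrt_err hr1
  -- bounds on the polynomial pieces
  have hQb : |Q| ≤ KQ := by
    have : Q = 1 + 𝒜 / r + (-(1/2) - D₁) / r ^ 2 + (-(2 * D₂)) / r ^ 3 := by
      rw [hQ]; field_simp; ring
    rw [this]
    refine le_trans (poly_bound3 _ _ _ _ hr1) ?_
    have h1 : |(-(1/2) - D₁ : ℝ)| ≤ 1/2 + |D₁| := by
      refine le_trans (abs_sub _ _) ?_
      simp [abs_of_nonneg]
    have h2 : |(-(2 * D₂) : ℝ)| ≤ 2 * |D₂| := by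
      rw [abs_neg, abs_mul]; simp
    simp only [abs_one, hKQ]
    linarith
  have hFb : |F| ≤ KF := by
    calc |F| = |Q + (F - Q)| := by ring_nf
      _ ≤ |Q| + |F - Q| := abs_add_le _ _
      _ ≤ KQ + 1 / r ^ 4 := by gcongr
      _ ≤ KQ + 1 := by
          have : 1 / r ^ 4 ≤ 1 := by
            rw [div_le_one (by positivity)]
            exact one_le_pow₀ hr1
          linarith
      _ = KF := hKF.symm
  have hPu'b : |Pu'| ≤ KP / r ^ 2 := by
    have : Pu' = (-C₁ + (-(2 * C₂)) / r + (-(3 * C₃)) / r ^ 2 + 0 / r ^ 3) / r ^ 2 := by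
      rw [hPu']; field_simp; ring
    rw [this, abs_div, abs_of_pos (by positivity : (0:ℝ) < r ^ 2)]
    gcongr
    refine le_trans (poly_bound3 _ _ _ _ hr1) ?_
    simp only [abs_neg, abs_mul, abs_zero, hKP]
    simp [abs_of_nonneg]
  have hu'b : |u' r| ≤ (KP + |Cp|) / r ^ 2 := by
    calc |u' r| = |Pu' + (u' r - Pu')| := by ring_nf
      _ ≤ |Pu'| + |u' r - Pu'| := abs_add_le _ _
      _ ≤ KP / r ^ 2 + |Cp| / r ^ 5 := by gcongr
      _ ≤ KP / r ^ 2 + |Cp| / r ^ 2 :=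
          add_le_add le_rfl (div_le_div_of_nonneg_left (abs_nonneg Cp)
            (by positivity) (hpow 2 5 (by norm_num)))
      _ = (KP + |Cp|) / r ^ 2 := by ring
  have hPGb : |PG| ≤ KG * r ^ 2 := by
    have h1 : |PG| ≤ |1 + r ^ 2| + |mR / r| := abs_sub _ _
    have h2 : |1 + r ^ 2| = 1 + r ^ 2 := abs_of_pos (by positivity)
    have h3 : |mR / r| = |mR| / r := by rw [abs_div, abs_of_pos hr0]
    have h4 : |mR| / r ≤ |mR| * r ^ 2 := by
      rw [div_le_iff₀ hr0]
      have h13 : (1:ℝ) ≤ r ^ 3 := one_le_pow₀ hr1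
      nlinarith [mul_le_mul_of_nonneg_left h13 (abs_nonneg mR)]
    have h5 : (1:ℝ) + r ^ 2 ≤ 2 * r ^ 2 := by nlinarith
    rw [hKGdef]; nlinarith
  have hTb : |T| ≤ KT := by
    have : T = -2 * C₁ + (2 * C₁ ^ 2 - 4 * C₂ - 2 * 𝒜 * C₁) / r +
        (2 * C₁ * D₁ - C₁ + 6 * C₁ * C₂ - 6 * C₃ - 4 * 𝒜 * C₂ +
          2 * 𝒜 * C₁ ^ 2 - 2 * C₁ ^ 3) / r ^ 2 + 0 / r ^ 3 := by
      rw [hT]; ring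
    rw [this]
    refine le_trans (poly_bound3 _ _ _ _ hr1) ?_
    have : |(-2 * C₁ : ℝ)| = 2 * |C₁| := by rw [abs_mul]; norm_num
    simp only [abs_zero, this, hKT]
    linarith
  -- lower bound on u
  have hub : (1:ℝ)/2 ≤ u r := by
    have hS : |C₁| + |C₂| + |C₃| + |Cu| ≤ r / 4 := by linarith
    have h1 : |Pu - 1| ≤ (|C₁| + |C₂| + |C₃|) / r := by
      have : Pu - 1 = (C₁ + C₂ / r + C₃ / r ^ 2 + 0 / r ^ 3) / r := by
        rw [hPu]; field_simp; ring
      rw [this, abs_div, abs_of_pos hr0]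
      gcongr
      refine le_trans (poly_bound3 _ _ _ _ hr1) ?_
      simp
    have hr14 : r ≤ r ^ 4 := by
      calc r = r ^ 1 := (pow_one r).symm
        _ ≤ r ^ 4 := hpow 1 4 (by norm_num)
    have h2 : |u r - Pu| ≤ |Cu| / r :=
      le_trans heu (div_le_div_of_nonneg_left (abs_nonneg Cu) hr0 hr14)
    have h3 : |u r - 1| ≤ (|C₁| + |C₂| + |C₃| + |Cu|) / r := by
      calc |u r - 1| = |(u r - Pu) + (Pu - 1)| := by ring_nf
        _ ≤ |u r - Pu| + |Pu - 1| := abs_add_le _ _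
        _ ≤ |Cu| / r + (|C₁| + |C₂| + |C₃|) / r := by gcongr
        _ = (|C₁| + |C₂| + |C₃| + |Cu|) / r := by ring
    have h4 : (|C₁| + |C₂| + |C₃| + |Cu|) / r ≤ 1 / 4 := by
      rw [div_le_iff₀ hr0]
      linarith
    have := abs_le.1 (le_trans h3 h4)
    linarith [this.1]
  have hu0 : (0:ℝ) < u r := lt_of_lt_of_le (by norm_num) hub
  -- rewrite the derivative
  rw [f0_deriv 𝒜 𝓑 D₁ D₂ hr0]
  -- turn goal into a bound on Δ = 2 G u' F - u T
  have hgoal : 2 * G r * u' r * F / u r - T = (2 * G r * u' r * F - u r * T) / u r := by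
    field_simp
  rw [← hF, hgoal, abs_div, abs_of_pos hu0]
  -- the decomposition
  have hsplit : 2 * G r * u' r * F - u r * T =
      (2 * PG * Pu' * Q - Pu * T) + 2 * (G r - PG) * u' r * F +
        2 * PG * (u' r - Pu') * F + 2 * PG * Pu' * (F - Q) - (u r - Pu) * T := by
    ring
  -- bound the main term
  have hM : |2 * PG * Pu' * Q - Pu * T| ≤ KM / r ^ 3 := by
    rw [hPG, hPu', hQ, hPu, hT, main_id 𝒜 C₁ C₂ C₃ D₁ D₂ mR hr0',
      abs_div, abs_of_pos (by positivity : (0:ℝ) < r ^ 3)]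
    gcongr
    exact le_trans (poly_bound5 _ _ _ _ _ _ hr1) (le_of_eq hKM.symm)
  -- bound the error terms
  have hcube : ∀ a : ℝ, 0 ≤ a → a / r ^ 4 ≤ a / r ^ 3 := fun a ha =>
    div_le_div_of_nonneg_left ha (by positivity) (hpow 3 4 (by norm_num))
  have hE1 : |2 * (G r - PG) * u' r * F| ≤ 2 * |Cg| * (KP + |Cp|) * KF / r ^ 3 := by
    calc |2 * (G r - PG) * u' r * F| = 2 * |G r - PG| * |u' r| * |F| := by
          rw [abs_mul, abs_mul, abs_mul]; norm_num
      _ ≤ 2 * (|Cg| / r ^ 2) * ((KP + |Cp|) / r ^ 2) * KF := by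
          gcongr <;> positivity
      _ = (2 * |Cg| * (KP + |Cp|) * KF) / r ^ 4 := by
          rw [eq_div_iff (by positivity : (r:ℝ) ^ 4 ≠ 0)]
          field_simp
      _ ≤ _ := hcube _ (by positivity)
  have hE2 : |2 * PG * (u' r - Pu') * F| ≤ 2 * KG * |Cp| * KF / r ^ 3 := by
    calc |2 * PG * (u' r - Pu') * F| = 2 * |PG| * |u' r - Pu'| * |F| := by
          rw [abs_mul, abs_mul, abs_mul]; norm_num
      _ ≤ 2 * (KG * r ^ 2) * (|Cp| / r ^ 5) * KF := by
          gcongr <;> positivity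
      _ = 2 * KG * |Cp| * KF / r ^ 3 := by
          rw [eq_div_iff (by positivity : (r:ℝ) ^ 3 ≠ 0)]
          field_simp
  have hE3 : |2 * PG * Pu' * (F - Q)| ≤ 2 * KG * KP / r ^ 3 := by
    calc |2 * PG * Pu' * (F - Q)| = 2 * |PG| * |Pu'| * |F - Q| := by
          rw [abs_mul, abs_mul, abs_mul]; norm_num
      _ ≤ 2 * (KG * r ^ 2) * (KP / r ^ 2) * (1 / r ^ 4) := by
          gcongr <;> positivity
      _ = (2 * KG * KP) / r ^ 4 := by
          rw [eq_div_iff (by positivity : (r:ℝ) ^ 4 ≠ 0)]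
          field_simp
      _ ≤ _ := hcube _ (by positivity)
  have hE4 : |(u r - Pu) * T| ≤ |Cu| * KT / r ^ 3 := by
    calc |(u r - Pu) * T| = |u r - Pu| * |T| := abs_mul _ _
      _ ≤ (|Cu| / r ^ 4) * KT := by gcongr <;> positivity
      _ = (|Cu| * KT) / r ^ 4 := by ring
      _ ≤ _ := hcube _ (by positivity)
  have hΔ : |2 * G r * u' r * F - u r * T| ≤ KΔ / r ^ 3 := by
    rw [hsplit]
    calc |(2 * PG * Pu' * Q - Pu * T) + 2 * (G r - PG) * u' r * F +
          2 * PG * (u' r - Pu') * F + 2 * PG * Pu' * (F - Q) - (u r - Pu) * T|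
        ≤ |(2 * PG * Pu' * Q - Pu * T) + 2 * (G r - PG) * u' r * F +
            2 * PG * (u' r - Pu') * F + 2 * PG * Pu' * (F - Q)| + |(u r - Pu) * T| :=
          abs_sub _ _
      _ ≤ |(2 * PG * Pu' * Q - Pu * T) + 2 * (G r - PG) * u' r * F +
            2 * PG * (u' r - Pu') * F| + |2 * PG * Pu' * (F - Q)| + |(u r - Pu) * T| := by
          gcongr; exact abs_add_le _ _
      _ ≤ |(2 * PG * Pu' * Q - Pu * T) + 2 * (G r - PG) * u' r * F| +
            |2 * PG * (u' r - Pu') * F| + |2 * PG * Pu' * (F - Q)| + |(u r - Pu) * T| := by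
          gcongr; exact abs_add_le _ _
      _ ≤ |2 * PG * Pu' * Q - Pu * T| + |2 * (G r - PG) * u' r * F| +
            |2 * PG * (u' r - Pu') * F| + |2 * PG * Pu' * (F - Q)| + |(u r - Pu) * T| := by
          gcongr; exact abs_add_le _ _
      _ ≤ KM / r ^ 3 + 2 * |Cg| * (KP + |Cp|) * KF / r ^ 3 +
            2 * KG * |Cp| * KF / r ^ 3 + 2 * KG * KP / r ^ 3 + |Cu| * KT / r ^ 3 := by
          gcongr
      _ = KΔ / r ^ 3 := by rw [hKΔ]; ring
  -- conclude
  have hrpow : (2 * KΔ) * r ^ (-3:ℝ) = 2 * (KΔ / r ^ 3) := by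
    rw [show (-3:ℝ) = -((3:ℕ):ℝ) by norm_num, rpow_negnat hr0]
    ring
  rw [hrpow]
  calc |2 * G r * u' r * F - u r * T| / u r
      ≤ |2 * G r * u' r * F - u r * T| / (1/2) :=
        div_le_div_of_nonneg_left (abs_nonneg _) (by norm_num) hub
    _ = 2 * |2 * G r * u' r * F - u r * T| := by ring
    _ ≤ 2 * (KΔ / r ^ 3) := by linarith
end

section
/- Let m, 𝒥, 𝒬, A be real numbers with A ≥ 4π √(𝒬⁴ + 4𝒥²) and m² ≥ (𝒬² + √(𝒬⁴ + 4𝒥²))/2. Then (m² − 𝒬²/2)² − 𝒬⁴/4 − 𝒥² ≥ 0 and A/(8π) ≥ m² − 𝒬²/2 − √((m² − 𝒬²/2)² − 𝒬⁴/4 − 𝒥²). -/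
open Real

/-- Theorem 8.1: the lower bound for the area of black holes in terms of mass,
angular momentum, and charge follows from the area–angular momentum–charge
inequality and the mass–angular momentum–charge inequality. -/
theorem stmt_12 (m 𝒥 𝒬 A : ℝ)
    (hA : A ≥ 4 * π * Real.sqrt (𝒬 ^ 4 + 4 * 𝒥 ^ 2))
    (hm : m ^ 2 ≥ (𝒬 ^ 2 + Real.sqrt (𝒬 ^ 4 + 4 * 𝒥 ^ 2)) / 2) :
    (m ^ 2 - 𝒬 ^ 2 / 2) ^ 2 - 𝒬 ^ 4 / 4 - 𝒥 ^ 2 ≥ 0 ∧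
    A / (8 * π) ≥ m ^ 2 - 𝒬 ^ 2 / 2 -
      Real.sqrt ((m ^ 2 - 𝒬 ^ 2 / 2) ^ 2 - 𝒬 ^ 4 / 4 - 𝒥 ^ 2) := by
  set s := Real.sqrt (𝒬 ^ 4 + 4 * 𝒥 ^ 2) with hs
  have hnn : (0:ℝ) ≤ 𝒬 ^ 4 + 4 * 𝒥 ^ 2 := by positivity
  have hs0 : 0 ≤ s := Real.sqrt_nonneg _
  have hs2 : s ^ 2 = 𝒬 ^ 4 + 4 * 𝒥 ^ 2 := Real.sq_sqrt hnn
  set x := m ^ 2 - 𝒬 ^ 2 / 2 with hx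
  have hxs : x ≥ s / 2 := by rw [hx]; linarith
  have h1 : x ^ 2 - 𝒬 ^ 4 / 4 - 𝒥 ^ 2 ≥ 0 := by
    nlinarith [sq_nonneg (x - s/2)]
  refine ⟨h1, ?_⟩
  have hsqrt : Real.sqrt (x ^ 2 - 𝒬 ^ 4 / 4 - 𝒥 ^ 2) ≥ x - s / 2 := by
    rcases le_or_gt (x - s/2) 0 with h | h
    · exact le_trans h (Real.sqrt_nonneg _)
    · have := Real.le_sqrt (le_of_lt h) (y := x ^ 2 - 𝒬 ^ 4 / 4 - 𝒥 ^ 2)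
      rw [ge_iff_le, this h1]
      nlinarith
  have hpi : (0:ℝ) < π := Real.pi_pos
  have hA' : A / (8 * π) ≥ s / 2 := by
    rw [ge_iff_le, le_div_iff₀ (by positivity)]
    nlinarith
  linarith
end
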